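/- arXiv:1705.09061 — 5 statements merged into one kernel-verified Lean document; each statement's English description precedes it below -/
import Mathlib

section
/- Let N be a finite set, let A ⊆ N be nonempty, let p ∈ (0,1] be a real number with |A| ≥ 1/p, and let S be a random subset of N obtained by including each element of N independently with probability p. Then the probability that simultaneously S ∩ A ≠ ∅ and |S| ≤ 4p|N| is at least 1 − 1/e − 1/4. -/
open MeasureTheory Finset

lemma sumA {N : Type*} [DecidableEq N] (p : ℝ) (s : Finset N) :
    ∑ F ∈ s.powerset, p ^ F.card * (1 - p) ^ (s \ F).card = 1 := by
  induction s using Finset.induction_on with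
  | empty => simp
  | @insert a s ha ih =>
    rw [Finset.sum_powerset_insert ha]
    have h1 : ∀ F ∈ s.powerset,
        p ^ F.card * (1 - p) ^ ((insert a s) \ F).card
          = (1 - p) * (p ^ F.card * (1 - p) ^ (s \ F).card) := by
      intro F hF
      rw [Finset.mem_powerset] at hF
      have haF : a ∉ F := fun h => ha (hF h)
      rw [Finset.insert_sdiff_of_notMem _ haF, Finset.card_insert_of_notMem (by simp [ha])]
      ring
    have h2 : ∀ F ∈ s.powerset,
        p ^ (insert a F).card * (1 - p) ^ ((insert a s) \ (insert a F)).card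
          = p * (p ^ F.card * (1 - p) ^ (s \ F).card) := by
      intro F hF
      rw [Finset.mem_powerset] at hF
      have haF : a ∉ F := fun h => ha (hF h)
      rw [Finset.insert_sdiff_insert, Finset.sdiff_insert_of_notMem ha,
        Finset.card_insert_of_notMem haF]
      ring
    rw [Finset.sum_congr rfl h1, Finset.sum_congr rfl h2, ← Finset.mul_sum, ← Finset.mul_sum, ih]
    ring

lemma sumB {N : Type*} [DecidableEq N] (p : ℝ) (s : Finset N) :
    ∑ F ∈ s.powerset, (F.card : ℝ) * (p ^ F.card * (1 - p) ^ (s \ F).card)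
      = s.card * p := by
  induction s using Finset.induction_on with
  | empty => simp
  | @insert a s ha ih =>
    rw [Finset.sum_powerset_insert ha]
    have h1 : ∀ F ∈ s.powerset,
        (F.card : ℝ) * (p ^ F.card * (1 - p) ^ ((insert a s) \ F).card)
          = (1 - p) * ((F.card : ℝ) * (p ^ F.card * (1 - p) ^ (s \ F).card)) := by
      intro F hF
      rw [Finset.mem_powerset] at hF
      have haF : a ∉ F := fun h => ha (hF h)
      rw [Finset.insert_sdiff_of_notMem _ haF, Finset.card_insert_of_notMem (by simp [ha])]
      ring
    have h2 : ∀ F ∈ s.powerset,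
        ((insert a F).card : ℝ) * (p ^ (insert a F).card
            * (1 - p) ^ ((insert a s) \ (insert a F)).card)
          = p * ((F.card : ℝ) * (p ^ F.card * (1 - p) ^ (s \ F).card))
            + p * (p ^ F.card * (1 - p) ^ (s \ F).card) := by
      intro F hF
      rw [Finset.mem_powerset] at hF
      have haF : a ∉ F := fun h => ha (hF h)
      rw [Finset.insert_sdiff_insert, Finset.sdiff_insert_of_notMem ha,
        Finset.card_insert_of_notMem haF]
      push_cast
      ring
    rw [Finset.sum_congr rfl h1, Finset.sum_congr rfl h2, Finset.sum_add_distrib,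
      ← Finset.mul_sum, ← Finset.mul_sum, ← Finset.mul_sum, ih, sumA]
    rw [Finset.card_insert_of_notMem ha]
    push_cast
    ring

/-- **Sampling lemma underlying Algorithm `A₁`.**
Let `N` be a finite set, `A ⊆ N` nonempty, `p ∈ (0,1]` a real number with `|A| ≥ 1/p`,
and let `S` be a random subset of `N` obtained by including each element of `N`
independently with probability `p`.  Then the probability that simultaneously
`S ∩ A ≠ ∅` and `|S| ≤ 4 p |N|` is at least `1 - 1/e - 1/4`. -/
theorem random_subset_hits_and_small
    {Ω : Type*} [MeasurableSpace Ω] (μ : Measure Ω) [IsProbabilityMeasure μ]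
    {N : Type*} [Fintype N] [DecidableEq N]
    (A : Finset N) (hA : A.Nonempty)
    (p : ℝ) (hp0 : 0 < p) (hp1 : p ≤ 1) (hpA : 1 / p ≤ (A.card : ℝ))
    (S : Ω → Finset N)
    (hmeas : ∀ F : Finset N, MeasurableSet {ω | S ω = F})
    (hdist : ∀ F : Finset N, (μ {ω | S ω = F}).toReal =
      p ^ F.card * (1 - p) ^ (Fintype.card N - F.card)) :
    1 - 1 / Real.exp 1 - 1 / 4 ≤
      (μ {ω | (S ω ∩ A).Nonempty ∧ ((S ω).card : ℝ) ≤ 4 * p * (Fintype.card N : ℝ)}).toReal := by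
  classical
  set n := Fintype.card N with hn
  set q : Finset N → ℝ := fun F => p ^ F.card * (1 - p) ^ (n - F.card) with hq
  have hq0 : ∀ F, 0 ≤ q F := fun F =>
    mul_nonneg (pow_nonneg hp0.le _) (pow_nonneg (by linarith) _)
  -- measure of an event defined by a predicate on S
  have meas_eq : ∀ (Q : Finset N → Prop) (_ : DecidablePred Q),
      (μ {ω | Q (S ω)}).toReal = ∑ F ∈ Finset.univ.filter Q, q F := by
    intro Q _
    have hset : {ω | Q (S ω)} = ⋃ F ∈ Finset.univ.filter Q, {ω | S ω = F} := by
      ext ω; simp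
    rw [hset, measure_biUnion_finset _ (fun F _ => hmeas F)]
    · rw [ENNReal.toReal_sum (fun F _ => measure_ne_top μ _)]
      exact Finset.sum_congr rfl fun F _ => hdist F
    · intro F _ G _ hFG
      simp only [Function.onFun, Set.disjoint_left]
      rintro ω rfl; exact fun h => hFG h
  have total : ∑ F : Finset N, q F = 1 := by
    have := meas_eq (fun _ => True) (fun _ => instDecidableTrue)
    simp only [Set.setOf_true, Finset.filter_true] at this
    rw [← this, measure_univ, ENNReal.toReal_one]
  set Q : Finset N → Prop := fun F => (F ∩ A).Nonempty ∧ (F.card : ℝ) ≤ 4 * p * n with hQ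
  have hmain : (μ {ω | (S ω ∩ A).Nonempty ∧ ((S ω).card : ℝ) ≤ 4 * p * n}).toReal
      = ∑ F ∈ Finset.univ.filter Q, q F := meas_eq Q _
  rw [hmain]
  have split := Finset.sum_filter_add_sum_filter_not Finset.univ Q q
  have key : ∑ F ∈ Finset.univ.filter (fun F => ¬ Q F), q F ≤ 1 / Real.exp 1 + 1 / 4 := by
    set P1 : Finset N → Prop := fun F => F ∩ A = ∅ with hP1
    set P2 : Finset N → Prop := fun F => 4 * p * n < (F.card : ℝ) with hP2
    have hsub : Finset.univ.filter (fun F => ¬ Q F)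
        ⊆ Finset.univ.filter P1 ∪ Finset.univ.filter P2 := by
      intro F hF
      simp only [Finset.mem_filter, Finset.mem_union, Finset.mem_univ, true_and, hQ,
        not_and_or, not_le, Finset.not_nonempty_iff_eq_empty] at hF ⊢
      exact hF
    have hP1bound : ∑ F ∈ Finset.univ.filter P1, q F ≤ 1 / Real.exp 1 := by
      have hfil : Finset.univ.filter P1 = Aᶜ.powerset := by
        ext F
        simp only [Finset.mem_filter, Finset.mem_univ, true_and, Finset.mem_powerset, hP1]
        constructor
        · intro h x hxF
          rw [Finset.mem_compl]
          intro hxA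
          exact Finset.notMem_empty x (h ▸ Finset.mem_inter.2 ⟨hxF, hxA⟩)
        · intro h
          ext x
          simp only [Finset.mem_inter, Finset.notMem_empty, iff_false, not_and]
          intro hxF hxA
          exact (Finset.mem_compl.1 (h hxF)) hxA
      have hcongr : ∀ F ∈ Aᶜ.powerset, q F
          = (1 - p) ^ A.card * (p ^ F.card * (1 - p) ^ (Aᶜ \ F).card) := by
        intro F hF
        rw [Finset.mem_powerset] at hF
        have h1 : (Aᶜ \ F).card = Aᶜ.card - F.card := Finset.card_sdiff_of_subset hF
        have h2 : Aᶜ.card = n - A.card := Finset.card_compl A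
        have h3 : F.card ≤ Aᶜ.card := Finset.card_le_card hF
        have h4 : A.card ≤ n := Finset.card_le_univ A
        have h5 : n - F.card = A.card + (Aᶜ \ F).card := by omega
        rw [hq]
        simp only
        rw [h5, pow_add]
        ring
      rw [hfil, Finset.sum_congr rfl hcongr, ← Finset.mul_sum, sumA, mul_one]
      have e1 : (1 - p) ^ A.card ≤ Real.exp (-p) ^ A.card := by
        apply pow_le_pow_left₀ (by linarith)
        linarith [Real.add_one_le_exp (-p)]
      have e2 : Real.exp (-p) ^ A.card = Real.exp (-(p * A.card)) := by
        rw [← Real.exp_nat_mul]; ring_nf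
      have e3 : Real.exp (-(p * A.card)) ≤ Real.exp (-1) := by
        apply Real.exp_le_exp.2
        have : 1 ≤ p * A.card := by
          have := (div_le_iff₀ hp0).1 hpA
          nlinarith
        linarith
      calc (1 - p) ^ A.card ≤ Real.exp (-p) ^ A.card := e1
        _ = Real.exp (-(p * A.card)) := e2
        _ ≤ 1 / Real.exp 1 := by rw [one_div, ← Real.exp_neg]; exact e3
    have hn1 : 1 ≤ n := by
      have := hA.card_pos
      have := Finset.card_le_univ A
      omega
    have hc : 0 < 4 * p * (n : ℝ) := by
      have : (1:ℝ) ≤ n := by exact_mod_cast hn1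
      positivity
    have hP2bound : ∑ F ∈ Finset.univ.filter P2, q F ≤ 1 / 4 := by
      have step1 : ∑ F ∈ Finset.univ.filter P2, q F
          ≤ ∑ F ∈ Finset.univ.filter P2, ((F.card : ℝ) / (4 * p * n)) * q F := by
        apply Finset.sum_le_sum
        intro F hF
        simp only [Finset.mem_filter, hP2] at hF
        have h1 : (1:ℝ) ≤ (F.card : ℝ) / (4 * p * n) := (le_div_iff₀ hc).2 (by linarith [hF.2])
        nlinarith [hq0 F]
      have step2 : ∑ F ∈ Finset.univ.filter P2, ((F.card : ℝ) / (4 * p * n)) * q F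
          ≤ ∑ F : Finset N, ((F.card : ℝ) / (4 * p * n)) * q F := by
        apply Finset.sum_le_sum_of_subset_of_nonneg (Finset.filter_subset _ _)
        intro F _ _
        have := hq0 F
        positivity
      have step3 : ∑ F : Finset N, ((F.card : ℝ) / (4 * p * n)) * q F = 1 / 4 := by
        have hB : ∑ F : Finset N, (F.card : ℝ) * q F = n * p := by
          have := sumB p (Finset.univ : Finset N)
          rw [Finset.powerset_univ, Finset.card_univ] at this
          rw [← this]
          apply Finset.sum_congr rfl
          intro F _
          congr 2
          rw [hq]
          congr 1
          rw [Finset.card_sdiff_of_subset (Finset.subset_univ F), Finset.card_univ]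
        have : ∑ F : Finset N, ((F.card : ℝ) / (4 * p * n)) * q F
            = (1 / (4 * p * n)) * ∑ F : Finset N, (F.card : ℝ) * q F := by
          rw [Finset.mul_sum]
          apply Finset.sum_congr rfl
          intro F _
          ring
        rw [this, hB]
        field_simp
      linarith
    calc ∑ F ∈ Finset.univ.filter (fun F => ¬ Q F), q F
        ≤ ∑ F ∈ Finset.univ.filter P1 ∪ Finset.univ.filter P2, q F :=
          Finset.sum_le_sum_of_subset_of_nonneg hsub (fun F _ _ => hq0 F)
      _ ≤ ∑ F ∈ Finset.univ.filter P1, q F + ∑ F ∈ Finset.univ.filter P2, q F := by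
          have h := Finset.sum_union_inter (s₁ := Finset.univ.filter P1)
            (s₂ := Finset.univ.filter P2) (f := q)
          have h2 : 0 ≤ ∑ F ∈ Finset.univ.filter P1 ∩ Finset.univ.filter P2, q F :=
            Finset.sum_nonneg fun F _ => hq0 F
          linarith
      _ ≤ 1 / Real.exp 1 + 1 / 4 := add_le_add hP1bound hP2bound
  linarith [split, total, key]
end

section
/- Let G = (V, E) be a simple graph on n vertices and let ε be a real number with 0 ≤ ε ≤ 1. Let X be a random subset of V obtained by including each vertex independently with probability 1/(9n^ε). Let t = {j,k,l} be a triangle of G each of whose three edges e satisfies m(e) < n^ε. Then with probability at least 2/3 all three edges of t lie in Δ(X). -/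
open MeasureTheory

/-- `m({j,l})`: the number of common neighbors of `j` and `l` in `G`. -/
def commonNbrs {V : Type*} [Fintype V] (G : SimpleGraph V) [DecidableRel G.Adj]
    (j l : V) : ℕ :=
  (Finset.univ.filter fun k => G.Adj j k ∧ G.Adj l k).card

/-- `{u,v} ∈ Δ(X)`: no vertex of `X` is adjacent to both `u` and `v`. -/
def inDelta {V : Type*} (G : SimpleGraph V) (X : Finset V) (u v : V) : Prop :=
  ∀ x ∈ X, ¬ (G.Adj x u ∧ G.Adj x v)

lemma binom_sum {α : Type*} [DecidableEq α] (p q : ℝ) (s : Finset α) :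
    ∑ t ∈ s.powerset, p ^ t.card * q ^ (s.card - t.card) = (p + q) ^ s.card := by
  rw [← Finset.prod_const, Finset.prod_add]
  apply Finset.sum_congr rfl
  intro t ht
  simp only [Finset.prod_const]
  rw [Finset.card_sdiff_of_subset (Finset.mem_powerset.mp ht)]

lemma meas_mem_sum {Ω : Type*} [MeasurableSpace Ω] (μ : Measure Ω)
    {V : Type*} [Fintype V] [DecidableEq V] (X : Ω → Finset V)
    (hmeas : ∀ F : Finset V, MeasurableSet {ω | X ω = F})
    (s : Finset (Finset V)) :
    μ {ω | X ω ∈ s} = ∑ F ∈ s, μ {ω | X ω = F} := by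
  have : {ω | X ω ∈ s} = ⋃ F ∈ s, {ω | X ω = F} := by
    ext ω; simp
  rw [this, measure_biUnion_finset _ (fun F _ => hmeas F)]
  intro F hF G hG hne
  simp only [Function.onFun, Set.disjoint_left]
  intro ω h1 h2
  exact hne (h1 ▸ h2 ▸ rfl)

/-- **Lemma 2 of the paper.**
Let `G = (V,E)` be a simple graph on `n` vertices, `0 ≤ ε ≤ 1`, and let `X` be a random
subset of `V` obtained by including each vertex independently with probability
`1/(9 n^ε)`.  If `t = {j,k,l}` is a triangle of `G` each of whose three edges `e`
satisfies `m(e) < n^ε`, then with probability at least `2/3` all three edges of `t`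
lie in `Δ(X)`. -/
theorem light_triangle_edges_in_Delta
    {Ω : Type*} [MeasurableSpace Ω] (μ : Measure Ω) [IsProbabilityMeasure μ]
    {V : Type*} [Fintype V] [DecidableEq V]
    (G : SimpleGraph V) [DecidableRel G.Adj]
    (n : ℕ) (hn : n = Fintype.card V)
    (ε : ℝ) (hε0 : 0 ≤ ε) (hε1 : ε ≤ 1)
    (X : Ω → Finset V)
    (hmeas : ∀ F : Finset V, MeasurableSet {ω | X ω = F})
    (hdist : ∀ F : Finset V, (μ {ω | X ω = F}).toReal =
      (1 / (9 * (n : ℝ) ^ ε)) ^ F.card *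
        (1 - 1 / (9 * (n : ℝ) ^ ε)) ^ (n - F.card))
    (j k l : V) (hjk : G.Adj j k) (hjl : G.Adj j l) (hkl : G.Adj k l)
    (hlight_jk : (commonNbrs G j k : ℝ) < (n : ℝ) ^ ε)
    (hlight_jl : (commonNbrs G j l : ℝ) < (n : ℝ) ^ ε)
    (hlight_kl : (commonNbrs G k l : ℝ) < (n : ℝ) ^ ε) :
    2 / 3 ≤ (μ {ω | inDelta G (X ω) j k ∧ inDelta G (X ω) j l ∧
      inDelta G (X ω) k l}).toReal := by
  classical
  set p : ℝ := 1 / (9 * (n : ℝ) ^ ε) with hp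
  set q : ℝ := 1 - p with hq
  -- basic facts about n and p
  have hn1 : 1 ≤ n := by
    rw [hn]
    exact Fintype.card_pos_iff.mpr ⟨j⟩
  have hnpow : (1 : ℝ) ≤ (n : ℝ) ^ ε := by
    apply Real.one_le_rpow (by exact_mod_cast hn1) hε0
  have hppos : 0 < p := by
    apply div_pos one_pos
    linarith
  have hple : p ≤ 1 / 9 := by
    rw [hp, div_le_div_iff₀ (by linarith) (by norm_num)]
    linarith
  have hpq : p + q = 1 := by rw [hq]; ring
  -- the bad set B
  set B : Finset V := Finset.univ.filter
    (fun x => (G.Adj x j ∧ G.Adj x k) ∨ (G.Adj x j ∧ G.Adj x l) ∨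
      (G.Adj x k ∧ G.Adj x l)) with hB
  -- card bound
  have hcardB : (B.card : ℝ) < 3 * (n : ℝ) ^ ε := by
    have h1 : B ⊆ (Finset.univ.filter fun x => G.Adj j x ∧ G.Adj k x) ∪
        ((Finset.univ.filter fun x => G.Adj j x ∧ G.Adj l x) ∪
         (Finset.univ.filter fun x => G.Adj k x ∧ G.Adj l x)) := by
      intro x hx
      simp only [hB, Finset.mem_filter, Finset.mem_union] at hx ⊢
      rcases hx.2 with ⟨h1, h2⟩ | ⟨h1, h2⟩ | ⟨h1, h2⟩
      · exact Or.inl ⟨hx.1, h1.symm, h2.symm⟩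
      · exact Or.inr (Or.inl ⟨hx.1, h1.symm, h2.symm⟩)
      · exact Or.inr (Or.inr ⟨hx.1, h1.symm, h2.symm⟩)
    have h2 := Finset.card_le_card h1
    have h3 := Finset.card_union_le
      (Finset.univ.filter fun x => G.Adj j x ∧ G.Adj k x)
      ((Finset.univ.filter fun x => G.Adj j x ∧ G.Adj l x) ∪
       (Finset.univ.filter fun x => G.Adj k x ∧ G.Adj l x))
    have h4 := Finset.card_union_le
      (Finset.univ.filter fun x => G.Adj j x ∧ G.Adj l x)
      (Finset.univ.filter fun x => G.Adj k x ∧ G.Adj l x)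
    have hc : B.card ≤ commonNbrs G j k + (commonNbrs G j l + commonNbrs G k l) := by
      unfold commonNbrs
      omega
    calc (B.card : ℝ) ≤ (commonNbrs G j k : ℝ) + ((commonNbrs G j l : ℝ) +
          (commonNbrs G k l : ℝ)) := by exact_mod_cast hc
      _ < 3 * (n : ℝ) ^ ε := by linarith
  -- probability that a given vertex is in X
  have hmemA : ∀ v : V, MeasurableSet {ω | v ∈ X ω} := by
    intro v
    have : {ω | v ∈ X ω} = ⋃ F ∈ Finset.univ.filter (fun F : Finset V => v ∈ F),
        {ω | X ω = F} := by
      ext ω; simp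
    rw [this]
    exact (Finset.univ.filter (fun F : Finset V => v ∈ F)).measurableSet_biUnion
      (fun F _ => hmeas F)
  have hAv : ∀ v : V, (μ {ω | v ∈ X ω}).toReal = p := by
    intro v
    have hset : {ω | v ∈ X ω} = {ω | X ω ∈ Finset.univ.filter (fun F : Finset V => v ∈ F)} := by
      ext ω; simp
    rw [hset, meas_mem_sum μ X hmeas, ENNReal.toReal_sum (fun F _ => measure_ne_top μ _)]
    have hre : ∀ F ∈ Finset.univ.filter (fun F : Finset V => v ∈ F),
        (μ {ω | X ω = F}).toReal = p ^ F.card * q ^ (n - F.card) :=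
      fun F _ => hdist F
    rw [Finset.sum_congr rfl hre]
    -- reindex by erasing v
    have hbij : ∑ F ∈ Finset.univ.filter (fun F : Finset V => v ∈ F),
        p ^ F.card * q ^ (n - F.card) =
        ∑ F' ∈ (Finset.univ.erase v).powerset,
        p ^ (F'.card + 1) * q ^ (n - (F'.card + 1)) := by
      apply Finset.sum_nbij' (fun F => F.erase v) (fun F' => insert v F')
      · intro F hF
        simp only [Finset.mem_filter] at hF
        simp only [Finset.mem_powerset]
        intro x hx
        simp only [Finset.mem_erase] at hx ⊢
        exact ⟨hx.1, Finset.mem_univ x⟩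
      · intro F' hF'
        simp only [Finset.mem_powerset] at hF'
        simp only [Finset.mem_filter]
        exact ⟨Finset.mem_univ _, Finset.mem_insert_self v F'⟩
      · intro F hF
        simp only [Finset.mem_filter] at hF
        exact Finset.insert_erase hF.2
      · intro F' hF'
        simp only [Finset.mem_powerset] at hF'
        apply Finset.erase_insert
        intro hv
        exact (Finset.mem_erase.mp (hF' hv)).1 rfl
      · intro F hF
        simp only [Finset.mem_filter] at hF
        rw [Finset.card_erase_of_mem hF.2]
        have hFpos : 1 ≤ F.card := Finset.card_pos.mpr ⟨v, hF.2⟩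
        congr 2 <;> omega
    rw [hbij]
    have hcarderase : (Finset.univ.erase v).card = n - 1 := by
      rw [Finset.card_erase_of_mem (Finset.mem_univ v), Finset.card_univ, hn]
    have : ∀ F' ∈ (Finset.univ.erase v).powerset,
        p ^ (F'.card + 1) * q ^ (n - (F'.card + 1)) =
        p * (p ^ F'.card * q ^ ((Finset.univ.erase v).card - F'.card)) := by
      intro F' hF'
      rw [hcarderase]
      have : n - (F'.card + 1) = n - 1 - F'.card := by omega
      rw [this, pow_succ]
      ring
    rw [Finset.sum_congr rfl this, ← Finset.mul_sum, binom_sum, hpq, one_pow, mul_one]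
  -- the bad event and union bound
  set Bad : Set Ω := ⋃ v ∈ B, {ω | v ∈ X ω} with hBad
  have hBadmeas : MeasurableSet Bad := B.measurableSet_biUnion (fun v _ => hmemA v)
  have hBadle : μ Bad ≤ ENNReal.ofReal (B.card * p) := by
    calc μ Bad ≤ ∑ v ∈ B, μ {ω | v ∈ X ω} := measure_biUnion_finset_le B _
      _ = ∑ v ∈ B, ENNReal.ofReal p := by
          apply Finset.sum_congr rfl
          intro v _
          rw [← hAv v, ENNReal.ofReal_toReal (measure_ne_top μ _)]
      _ = ENNReal.ofReal (B.card * p) := by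
          rw [Finset.sum_const, nsmul_eq_mul]
          rw [← ENNReal.ofReal_natCast, ← ENNReal.ofReal_mul (by positivity)]
  have hBadlt : μ Bad ≤ ENNReal.ofReal (1/3) := by
    apply le_trans hBadle
    apply ENNReal.ofReal_le_ofReal
    have : (B.card : ℝ) * p ≤ 3 * (n:ℝ)^ε * p := by
      apply mul_le_mul_of_nonneg_right (le_of_lt hcardB) (le_of_lt hppos)
    rw [hp] at this ⊢
    calc (B.card : ℝ) * (1 / (9 * (n : ℝ) ^ ε)) ≤ 3 * (n:ℝ)^ε * (1 / (9 * (n : ℝ) ^ ε)) := this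
      _ = 1/3 := by
          field_simp
          ring
  -- the good event is the complement of Bad
  have hgood : {ω | inDelta G (X ω) j k ∧ inDelta G (X ω) j l ∧
      inDelta G (X ω) k l} = Badᶜ := by
    ext ω
    simp only [Set.mem_compl_iff, Set.mem_setOf_eq]
    constructor
    · rintro ⟨h1, h2, h3⟩ hω
      obtain ⟨v, hvB, hvX⟩ := Set.mem_iUnion₂.mp hω
      have hv := (Finset.mem_filter.mp hvB).2
      rcases hv with h | h | h
      exacts [h1 v hvX h, h2 v hvX h, h3 v hvX h]
    · intro h
      have h' : ∀ v ∈ B, v ∉ X ω := by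
        intro v hv hvX
        exact h (Set.mem_iUnion₂.mpr ⟨v, hv, hvX⟩)
      refine ⟨?_, ?_, ?_⟩ <;> intro x hx hadj <;>
        exact h' x (Finset.mem_filter.mpr ⟨Finset.mem_univ x, by tauto⟩) hx
  rw [hgood, measure_compl hBadmeas (measure_ne_top μ _), measure_univ]
  have h23 : ENNReal.ofReal (2/3) ≤ 1 - μ Bad := by
    have : μ Bad + ENNReal.ofReal (2/3) ≤ 1 := by
      calc μ Bad + ENNReal.ofReal (2/3) ≤ ENNReal.ofReal (1/3) + ENNReal.ofReal (2/3) := by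
            exact add_le_add hBadlt le_rfl
        _ = 1 := by
            rw [← ENNReal.ofReal_add (by norm_num) (by norm_num)]
            norm_num
    exact ENNReal.le_sub_of_add_le_left (measure_ne_top μ _) this
  calc (2:ℝ)/3 = (ENNReal.ofReal (2/3)).toReal := by
        rw [ENNReal.toReal_ofReal (by norm_num)]
    _ ≤ (1 - μ Bad).toReal := by
        apply ENNReal.toReal_mono _ h23
        exact (tsub_le_self.trans_lt ENNReal.one_lt_top).ne
end

section
/- Let V = {0,…,n−1} and let 𝓔 be the set of unordered pairs of elements of V, with M = |𝓔| = n(n−1)/2. On a probability space, let (e_f)_{f∈𝓔} be independent random variables, each uniform on {0,1}, let E denote their joint tuple, and let G be the random graph with vertex set V and edge set {f : e_f = 1}. Let T be any random variable taking values in finite sets of 3-element subsets of V such that almost surely every element of T is a triangle of G. Then the mutual information between E and T, measured in bits, satisfies I(E; T) ≥ 𝔼[|P(T)|], where P(T) is the set of pairs f ∈ 𝓔 contained in at least one element of T. -/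
open MeasureTheory

/-- The set `𝓔` of unordered pairs of distinct elements of `V = {0,…,n-1}`
(the potential edges of a graph on `V`). -/
abbrev EdgeIdx (n : ℕ) := {e : Sym2 (Fin n) // ¬ e.IsDiag}

/-- Adjacency in the graph on `V = {0,…,n-1}` whose edge set is encoded by the
indicator function `g : 𝓔 → {0,1}`. -/
def gAdj {n : ℕ} (g : EdgeIdx n → Bool) (u v : Fin n) : Prop :=
  ∃ e : EdgeIdx n, e.val = s(u, v) ∧ g e = true

instance {n : ℕ} (g : EdgeIdx n → Bool) (u v : Fin n) : Decidable (gAdj g u v) := by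
  unfold gAdj; infer_instance

/-- `s` is a triangle of the graph encoded by the edge indicators `g`. -/
def isTriangle {n : ℕ} (g : EdgeIdx n → Bool) (s : Finset (Fin n)) : Prop :=
  s.card = 3 ∧ ∀ u ∈ s, ∀ v ∈ s, u ≠ v → gAdj g u v

instance {n : ℕ} (g : EdgeIdx n → Bool) (s : Finset (Fin n)) :
    Decidable (isTriangle g s) := by unfold isTriangle; infer_instance

/-- `P(R)`: the set of pairs `f ∈ 𝓔` contained in at least one member of `R`. -/
def coveredPairs {n : ℕ} (R : Finset (Finset (Fin n))) : Finset (EdgeIdx n) :=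
  Finset.univ.filter fun e => ∃ s ∈ R, e.val ∈ s.sym2

/-- The Shannon mutual information `I(A; B)`, measured in bits, of two finitely-valued
random variables `A` and `B` on a probability space `(Ω, μ)`. -/
noncomputable def mutualInfo {Ω α β : Type*} [MeasurableSpace Ω] (μ : Measure Ω)
    [Fintype α] [Fintype β] (A : Ω → α) (B : Ω → β) : ℝ :=
  ∑ a : α, ∑ b : β,
    (μ {ω | A ω = a ∧ B ω = b}).toReal *
      Real.logb 2 ((μ {ω | A ω = a ∧ B ω = b}).toReal /
        ((μ {ω | A ω = a}).toReal * (μ {ω | B ω = b}).toReal))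

lemma gibbs_log {ι : Type*} [Fintype ι] (a : ι → ℝ) (ha : ∀ i, 0 ≤ a i)
    (S : Finset ι) (hs : ∀ i ∉ S, a i = 0) (N : ℕ) (hN : S.card ≤ N) (hN0 : 0 < N) :
    ∑ i, a i * Real.log ((∑ j, a j) / a i) ≤ (∑ j, a j) * Real.log N := by
  set A := ∑ j, a j with hA
  have hA0 : 0 ≤ A := Finset.sum_nonneg fun i _ => ha i
  rcases eq_or_lt_of_le hA0 with h0 | hApos
  · have hz : ∀ i ∈ Finset.univ, a i = 0 :=
      (Finset.sum_eq_zero_iff_of_nonneg (fun i _ => ha i)).mp h0.symm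
    have l : ∑ i, a i * Real.log (A / a i) = 0 :=
      Finset.sum_eq_zero fun i hi => by rw [hz i hi]; ring
    have r : A * Real.log N = 0 := by rw [← h0]; ring
    linarith
  · have hNR : (0:ℝ) < (N:ℝ) := by exact_mod_cast hN0
    have hSA : ∑ i ∈ S, a i = A := by
      rw [hA]; exact Finset.sum_subset (Finset.subset_univ S) (fun i _ hi => hs i hi)
    have key : ∑ i ∈ S, a i * Real.log (A / (a i * N)) ≤ 0 := by
      have step1 : ∑ i ∈ S, a i * Real.log (A / (a i * N)) ≤ ∑ i ∈ S, (A / N - a i) := by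
        apply Finset.sum_le_sum
        intro i _
        rcases eq_or_lt_of_le (ha i) with h0i | hpi
        · rw [← h0i]; simp [div_nonneg hApos.le hNR.le]
        · have hx : 0 < A / (a i * N) := div_pos hApos (mul_pos hpi hNR)
          have := Real.log_le_sub_one_of_pos hx
          have h2 : a i * Real.log (A / (a i * N)) ≤ a i * (A / (a i * N) - 1) :=
            mul_le_mul_of_nonneg_left this (ha i)
          have h3 : a i * (A / (a i * N) - 1) = A / N - a i := by
            field_simp
          linarith
      have step2 : ∑ i ∈ S, (A / N - a i) = S.card * (A / N) - A := by
        rw [Finset.sum_sub_distrib, Finset.sum_const, nsmul_eq_mul, hSA]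
      have step3 : (S.card : ℝ) * (A / N) ≤ A := by
        have : (S.card : ℝ) ≤ N := by exact_mod_cast hN
        calc (S.card : ℝ) * (A / N) ≤ N * (A / N) :=
              mul_le_mul_of_nonneg_right this (div_nonneg hApos.le hNR.le)
          _ = A := by field_simp
      linarith
    have expand : ∀ i ∈ S, a i * Real.log (A / a i)
        = a i * Real.log (A / (a i * N)) + a i * Real.log N := by
      intro i _
      rcases eq_or_lt_of_le (ha i) with h0i | hpi
      · rw [← h0i]; ring
      · have h1 : A / a i = (A / (a i * N)) * N := by field_simp
        rw [h1, Real.log_mul (by positivity) (by positivity)]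
        ring
    calc ∑ i, a i * Real.log (A / a i)
        = ∑ i ∈ S, a i * Real.log (A / a i) :=
          (Finset.sum_subset (Finset.subset_univ S)
            (fun i _ hi => by rw [hs i hi]; ring)).symm
      _ = ∑ i ∈ S, (a i * Real.log (A / (a i * N)) + a i * Real.log N) :=
          Finset.sum_congr rfl expand
      _ = (∑ i ∈ S, a i * Real.log (A / (a i * N))) + (∑ i ∈ S, a i) * Real.log N := by
          rw [Finset.sum_add_distrib, Finset.sum_mul]
      _ ≤ 0 + A * Real.log N := by rw [hSA]; linarith
      _ = A * Real.log N := by ring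

lemma gibbs_logb {ι : Type*} [Fintype ι] (a : ι → ℝ) (ha : ∀ i, 0 ≤ a i)
    (S : Finset ι) (hs : ∀ i ∉ S, a i = 0) (N : ℕ) (hN : S.card ≤ N) (hN0 : 0 < N) :
    ∑ i, a i * Real.logb 2 ((∑ j, a j) / a i) ≤ (∑ j, a j) * Real.logb 2 N := by
  have hlog2 : (0:ℝ) < Real.log 2 := Real.log_pos (by norm_num)
  have h := gibbs_log a ha S hs N hN hN0
  simp only [Real.logb]
  calc ∑ i, a i * (Real.log ((∑ j, a j) / a i) / Real.log 2)
      = (∑ i, a i * Real.log ((∑ j, a j) / a i)) / Real.log 2 := by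
        rw [Finset.sum_div]; apply Finset.sum_congr rfl; intros; rw [mul_div_assoc]
    _ ≤ ((∑ j, a j) * Real.log N) / Real.log 2 := by gcongr
    _ = (∑ j, a j) * (Real.log N / Real.log 2) := by rw [mul_div_assoc]

/-- **Lemma 4 of the paper.**
Let `V = {0,…,n-1}`, `𝓔` the set of unordered pairs of elements of `V`, and
`M = |𝓔| = n(n-1)/2`.  Let `(e_f)_{f ∈ 𝓔}` be independent random variables, each
uniform on `{0,1}`, `E` their joint tuple, and `G` the random graph with edge set
`{f : e_f = 1}`.  If `T` is a random variable taking values in finite sets of 3-element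
subsets of `V` such that almost surely every element of `T` is a triangle of `G`, then
`I(E; T) ≥ 𝔼[|P(T)|]` (mutual information measured in bits). -/
theorem mutualInfo_ge_expected_covered_pairs
    {Ω : Type*} [MeasurableSpace Ω] (μ : Measure Ω) [IsProbabilityMeasure μ]
    (n M : ℕ) (hM : M = n * (n - 1) / 2) (hMcard : Fintype.card (EdgeIdx n) = M)
    (E : Ω → (EdgeIdx n → Bool))
    (hEmeas : ∀ g : EdgeIdx n → Bool, MeasurableSet {ω | E ω = g})
    (hEdist : ∀ g : EdgeIdx n → Bool,
      (μ {ω | E ω = g}).toReal = (1 / 2 : ℝ) ^ M)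
    (T : Ω → Finset (Finset (Fin n)))
    (hTmeas : ∀ R : Finset (Finset (Fin n)), MeasurableSet {ω | T ω = R})
    (hTtri : ∀ᵐ ω ∂μ, ∀ s ∈ T ω, isTriangle (E ω) s) :
    ∑ R : Finset (Finset (Fin n)),
        (μ {ω | T ω = R}).toReal * ((coveredPairs R).card : ℝ) ≤
      mutualInfo μ E T := by
  classical
  rw [MeasureTheory.ae_iff] at hTtri
  have hp0 : ∀ (g : EdgeIdx n → Bool) (R : Finset (Finset (Fin n))),
      (0:ℝ) ≤ (μ {ω | E ω = g ∧ T ω = R}).toReal := fun _ _ => ENNReal.toReal_nonneg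
  have hmeas : ∀ (g : EdgeIdx n → Bool) (R : Finset (Finset (Fin n))),
      MeasurableSet {ω | E ω = g ∧ T ω = R} := fun g R =>
    (hEmeas g).inter (hTmeas R)
  have hsum : ∀ R : Finset (Finset (Fin n)), (μ {ω | T ω = R}).toReal
      = ∑ g : EdgeIdx n → Bool, (μ {ω | E ω = g ∧ T ω = R}).toReal := by
    intro R
    have hU : {ω | T ω = R} = ⋃ g, {ω | E ω = g ∧ T ω = R} := by
      ext ω
      simp only [Set.mem_setOf_eq, Set.mem_iUnion]
      exact ⟨fun h => ⟨E ω, rfl, h⟩, fun ⟨g, _, h⟩ => h⟩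
    have hdisj : Pairwise (Function.onFun Disjoint
        fun g : EdgeIdx n → Bool => {ω | E ω = g ∧ T ω = R}) := by
      intro g g' hgg'
      refine Set.disjoint_left.mpr ?_
      rintro ω ⟨h1, -⟩ ⟨h2, -⟩
      exact hgg' (h1.symm.trans h2)
    rw [hU, measure_iUnion hdisj (fun g => hmeas g R), tsum_fintype,
      ENNReal.toReal_sum (fun g _ => measure_ne_top μ _)]
  have hzero : ∀ (g : EdgeIdx n → Bool) (R : Finset (Finset (Fin n))) (e : EdgeIdx n),
      e ∈ coveredPairs R → g e ≠ true → (μ {ω | E ω = g ∧ T ω = R}).toReal = 0 := by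
    intro g R e he hg
    have hsub : {ω | E ω = g ∧ T ω = R} ⊆ {ω | ¬ ∀ s ∈ T ω, isTriangle (E ω) s} := by
      rintro ω ⟨hE, hT⟩
      simp only [Set.mem_setOf_eq]
      intro hall
      apply hg
      simp only [coveredPairs, Finset.mem_filter, Finset.mem_univ, true_and] at he
      obtain ⟨s, hsR, hes⟩ := he
      have htri : isTriangle g s := by
        rw [← hE]; exact hall s (by rw [hT]; exact hsR)
      obtain ⟨u, v, huv⟩ : ∃ u v, e.val = s(u, v) := Sym2.exists.mp ⟨e.val, rfl⟩
      have hne : u ≠ v := by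
        have hd := e.prop; rw [huv] at hd; simpa [Sym2.mk_isDiag_iff] using hd
      rw [huv, Finset.mk_mem_sym2_iff] at hes
      obtain ⟨e', he'val, he'true⟩ := htri.2 u hes.1 v hes.2 hne
      have hee : e' = e := Subtype.ext (he'val.trans huv.symm)
      rw [← hee]; exact he'true
    rw [measure_mono_null hsub hTtri]
    simp
  rw [mutualInfo]
  simp only [hEdist]
  rw [Finset.sum_comm]
  apply Finset.sum_le_sum
  intro R _
  set A := (μ {ω | T ω = R}).toReal with hAdef
  set C := coveredPairs R with hC
  set k := C.card with hk
  set S := Finset.univ.filter (fun g : EdgeIdx n → Bool => ∀ e ∈ C, g e = true) with hS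
  have hkM : k ≤ M := by
    rw [← hMcard, ← Finset.card_univ]; exact Finset.card_le_univ C
  have hsupp : ∀ g ∉ S, (μ {ω | E ω = g ∧ T ω = R}).toReal = 0 := by
    intro g hg
    simp only [hS, Finset.mem_filter, Finset.mem_univ, true_and, not_forall] at hg
    obtain ⟨e, he, hge⟩ := hg
    exact hzero g R e he hge
  have hScard : S.card ≤ 2 ^ (M - k) := by
    have hinj : Set.InjOn
        (fun (g : EdgeIdx n → Bool) (e : {e : EdgeIdx n // e ∉ C}) => g e.val) S := by
      intro g hg g' hg' hgg'
      simp only [hS, Finset.coe_filter, Set.mem_setOf_eq, Finset.mem_univ, true_and]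
        at hg hg'
      funext e
      by_cases he : e ∈ C
      · rw [hg e he, hg' e he]
      · exact congrFun hgg' ⟨e, he⟩
    calc S.card ≤ (Finset.univ : Finset ({e : EdgeIdx n // e ∉ C} → Bool)).card :=
          Finset.card_le_card_of_injOn _ (fun _ _ => Finset.mem_univ _) hinj
      _ = 2 ^ (M - k) := by
          rw [Finset.card_univ, Fintype.card_fun, Fintype.card_bool,
            Fintype.card_subtype_compl, Fintype.card_coe, hMcard]
  have hlogN : Real.logb 2 ((2 ^ (M - k) : ℕ) : ℝ) = (M : ℝ) - (k : ℝ) := by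
    push_cast
    rw [Real.logb_pow, Real.logb_self_eq_one (by norm_num)]
    rw [Nat.cast_sub hkM]
    ring
  have hbound : ∑ g : EdgeIdx n → Bool,
      (μ {ω | E ω = g ∧ T ω = R}).toReal *
        Real.logb 2 (A / (μ {ω | E ω = g ∧ T ω = R}).toReal)
      ≤ A * ((M : ℝ) - (k : ℝ)) := by
    have h := gibbs_logb (fun g => (μ {ω | E ω = g ∧ T ω = R}).toReal)
      (fun _ => ENNReal.toReal_nonneg) S hsupp (2 ^ (M - k)) hScard (by positivity)
    rw [← hsum R] at h
    rwa [hlogN] at h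
  have hple : ∀ g : EdgeIdx n → Bool, (μ {ω | E ω = g ∧ T ω = R}).toReal ≤ A := by
    intro g
    rw [hAdef, hsum R]
    exact Finset.single_le_sum (fun g _ => hp0 g R) (Finset.mem_univ g)
  have hterm : ∀ g : EdgeIdx n → Bool,
      (μ {ω | E ω = g ∧ T ω = R}).toReal *
        Real.logb 2 ((μ {ω | E ω = g ∧ T ω = R}).toReal / ((1/2:ℝ)^M * A))
      = (M : ℝ) * (μ {ω | E ω = g ∧ T ω = R}).toReal
        - (μ {ω | E ω = g ∧ T ω = R}).toReal *
          Real.logb 2 (A / (μ {ω | E ω = g ∧ T ω = R}).toReal) := by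
    intro g
    set x := (μ {ω | E ω = g ∧ T ω = R}).toReal with hx
    rcases eq_or_lt_of_le (hp0 g R) with h0 | hxpos
    · rw [← hx] at h0
      rw [← h0]; ring
    · have hApos : 0 < A := lt_of_lt_of_le hxpos (hple g)
      have h1 : x / ((1/2:ℝ)^M * A) = (2:ℝ)^M * (x / A) := by
        rw [one_div, inv_pow]
        field_simp
      rw [h1, Real.logb_mul (by positivity) (ne_of_gt (div_pos hxpos hApos)),
        Real.logb_pow, Real.logb_self_eq_one (by norm_num),
        Real.logb_div (ne_of_gt hxpos) (ne_of_gt hApos),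
        Real.logb_div (ne_of_gt hApos) (ne_of_gt hxpos)]
      ring
  calc A * (k : ℝ)
      = (M : ℝ) * A - A * ((M : ℝ) - (k : ℝ)) := by ring
    _ ≤ (M : ℝ) * A - ∑ g : EdgeIdx n → Bool,
          (μ {ω | E ω = g ∧ T ω = R}).toReal *
            Real.logb 2 (A / (μ {ω | E ω = g ∧ T ω = R}).toReal) := by
        linarith [hbound]
    _ = ∑ g : EdgeIdx n → Bool,
          ((M : ℝ) * (μ {ω | E ω = g ∧ T ω = R}).toReal
            - (μ {ω | E ω = g ∧ T ω = R}).toReal *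
              Real.logb 2 (A / (μ {ω | E ω = g ∧ T ω = R}).toReal)) := by
        rw [Finset.sum_sub_distrib, ← Finset.mul_sum, ← hsum R]
    _ = ∑ g : EdgeIdx n → Bool,
          (μ {ω | E ω = g ∧ T ω = R}).toReal *
            Real.logb 2 ((μ {ω | E ω = g ∧ T ω = R}).toReal / ((1/2:ℝ)^M * A)) :=
        (Finset.sum_congr rfl (fun g _ => hterm g)).symm
end

section
/- Let V = {0,…,n−1} with n ≥ 3, let E be the tuple of independent uniform {0,1}-valued edge indicators of the random graph G = G(n,1/2), and let N = n(n−1)(n−2)/6. Let T₀, T₁, …, T_{n−1} be random variables, each taking values in finite sets of 3-element subsets of V, such that almost surely every element of every T_i is a triangle of G, and such that with probability at least 1 − 1/32 the union T₀ ∪ ⋯ ∪ T_{n−1} equals the set of all triangles of G. Let w be the (random) smallest index i maximizing |T_i|, and let S = T_w. Then the mutual information between E and S, measured in bits, satisfies I(E; S) ≥ (√2/3)·(N/(16n))^{2/3}·(1/15 − 1/32); in particular I(E; S) = Ω(n^{4/3}). -/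
open MeasureTheory

open Finset
section AuxLemmas
/-- Entropy is at most log of the support size (Jensen). -/
lemma entropy_le_log_card {ι : Type*} (G : Finset ι) (q : ι → ℝ)
    (hq0 : ∀ i ∈ G, 0 ≤ q i) (hsum : ∑ i ∈ G, q i = 1) :
    -(Real.log G.card) ≤ ∑ i ∈ G, q i * Real.log (q i) := by
  have hGne : G.Nonempty := by
    by_contra h
    rw [not_nonempty_iff_eq_empty.mp h] at hsum
    simp at hsum
  have hK : (0:ℝ) < G.card := by exact_mod_cast card_pos.mpr hGne
  have hjen := Real.concaveOn_negMulLog.le_map_sum (t := G)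
      (w := fun _ => (G.card : ℝ)⁻¹) (p := q)
      (fun i _ => by positivity)
      (by rw [sum_const, nsmul_eq_mul]; field_simp)
      (fun i hi => hq0 i hi)
  have hh : ∑ i ∈ G, (G.card : ℝ)⁻¹ • q i = (G.card : ℝ)⁻¹ := by
    rw [← smul_sum, hsum, smul_eq_mul, mul_one]
  rw [hh, ← smul_sum, smul_eq_mul] at hjen
  have h3 : Real.negMulLog ((G.card : ℝ)⁻¹) = (G.card : ℝ)⁻¹ * Real.log G.card := by
    simp [Real.negMulLog, Real.log_inv]
  rw [h3] at hjen
  have h4 : ∑ i ∈ G, Real.negMulLog (q i) ≤ Real.log G.card := by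
    calc ∑ i ∈ G, Real.negMulLog (q i)
        = (G.card : ℝ) * ((G.card : ℝ)⁻¹ * ∑ i ∈ G, Real.negMulLog (q i)) := by field_simp
      _ ≤ (G.card : ℝ) * ((G.card : ℝ)⁻¹ * Real.log G.card) := by
          exact mul_le_mul_of_nonneg_left hjen hK.le
      _ = Real.log G.card := by field_simp
  have h5 : ∑ i ∈ G, Real.negMulLog (q i) = -∑ i ∈ G, q i * Real.log (q i) := by
    rw [← sum_neg_distrib]
    exact sum_congr rfl fun i _ => by simp [Real.negMulLog]
  linarith [h5 ▸ h4]


lemma count_all_true {α : Type*} [Fintype α] [DecidableEq α] (F : Finset α) :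
    (Finset.univ.filter (fun g : α → Bool => ∀ e ∈ F, g e = true)).card
      = 2 ^ (Fintype.card α - F.card) := by
  rw [← Fintype.card_subtype]
  have e₁ : {g : α → Bool // ∀ e ∈ F, g e = true} ≃ ({e : α // e ∉ F} → Bool) :=
    { toFun := fun g e => g.1 e.1
      invFun := fun h => ⟨fun e => if he : e ∈ F then true else h ⟨e, he⟩, by
        intro e he; simp [he]⟩
      left_inv := by
        intro g; ext e
        by_cases he : e ∈ F
        · simp [he, g.2 e he]
        · simp [he]
      right_inv := by
        intro h; ext e
        simp [e.2] }
  rw [Fintype.card_congr e₁, Fintype.card_fun]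
  congr 1
  rw [Fintype.card_subtype_compl, Fintype.card_coe]


section Tri
variable {n : ℕ} (R : Finset (Finset (Fin n)))

/-- neighbours of `u` in the graph of covered pairs -/
noncomputable def nbr (u : Fin n) : Finset (Fin n) :=
  Finset.univ.filter fun v => u ≠ v ∧ ∃ e ∈ coveredPairs R, e.val = s(u, v)

lemma two_mul_choose_two (d : ℕ) : 2 * d.choose 2 = d * (d - 1) := by
  have := Nat.descFactorial_eq_factorial_mul_choose d 2
  have h2 : d.descFactorial 2 = (d - 1) * d := by
    rw [Nat.descFactorial_succ, Nat.descFactorial_one]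
  rw [h2] at this
  simp [Nat.factorial] at this
  rw [← this, Nat.mul_comm]

lemma six_mul_choose_three (h : ℕ) : 6 * h.choose 3 = h * (h - 1) * (h - 2) := by
  have := Nat.descFactorial_eq_factorial_mul_choose h 3
  have h2 : h.descFactorial 3 = (h - 2) * ((h - 1) * h) := by
    rw [Nat.descFactorial_succ, Nat.descFactorial_succ, Nat.descFactorial_one]
  rw [h2] at this
  simp [Nat.factorial] at this
  rw [← this]; ring

/-- sum of degrees is at most twice the number of pairs -/
lemma sum_deg_le : ∑ u : Fin n, (nbr R u).card ≤ 2 * (coveredPairs R).card := by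
  rw [← Finset.card_sigma]
  have := Finset.card_le_card_of_injOn
    (s := (Finset.univ : Finset (Fin n)).sigma (nbr R))
    (t := ((coveredPairs R).image Subtype.val) ×ˢ (Finset.univ : Finset Bool))
    (fun x => (s(x.1, x.2), decide (x.1 < x.2)))
    ?_ ?_
  · refine this.trans ?_
    rw [Finset.card_product, Finset.card_univ, Fintype.card_bool]
    have := Finset.card_image_le (s := coveredPairs R) (f := Subtype.val)
    omega
  · rintro ⟨u, v⟩ hx
    simp only [Finset.mem_coe, Finset.mem_sigma, Finset.mem_univ, true_and] at hx
    simp only [nbr, Finset.mem_filter, Finset.mem_univ, true_and] at hx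
    obtain ⟨huv, e, he, hev⟩ := hx
    simp only [Finset.mem_coe, Finset.mem_product, Finset.mem_univ, and_true, Finset.mem_image]
    exact ⟨e, he, hev⟩
  · rintro ⟨u, v⟩ hx ⟨u', v'⟩ hx' heq
    simp only [Finset.coe_sigma, Set.mem_sigma_iff, Finset.mem_coe] at hx hx'
    have huv : u ≠ v := by
      have := hx.2; simp only [nbr, Finset.mem_filter] at this; exact this.2.1
    have huv' : u' ≠ v' := by
      have := hx'.2; simp only [nbr, Finset.mem_filter] at this; exact this.2.1
    simp only [Prod.mk.injEq] at heq
    obtain ⟨h1, h2⟩ := heq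
    rw [Sym2.eq_iff] at h1
    rcases h1 with ⟨rfl, rfl⟩ | ⟨rfl, rfl⟩
    · rfl
    · exfalso
      rw [decide_eq_decide] at h2
      rcases lt_or_gt_of_ne huv with h | h
      · exact absurd (h2.mp h) (not_lt.mpr h.le)
      · exact absurd (h2.mpr h) (not_lt.mpr h.le)

/-- triangles through `u` are at most `choose (deg u) 2` -/
lemma tri_through_le (h3 : ∀ s ∈ R, s.card = 3)
    (hcov : ∀ s ∈ R, ∀ u ∈ s, ∀ v ∈ s, u ≠ v → ∃ e ∈ coveredPairs R, e.val = s(u, v))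
    (u : Fin n) :
    (R.filter fun s => u ∈ s).card ≤ (nbr R u).card.choose 2 := by
  rw [← Finset.card_powersetCard]
  apply Finset.card_le_card_of_injOn (fun s => s.erase u)
  · intro s hs
    simp only [Finset.mem_coe, Finset.mem_filter] at hs
    obtain ⟨hsR, hus⟩ := hs
    rw [Finset.mem_coe, Finset.mem_powersetCard]
    constructor
    · intro v hv
      rw [Finset.mem_erase] at hv
      simp only [nbr, Finset.mem_filter, Finset.mem_univ, true_and]
      exact ⟨(Ne.symm hv.1), hcov s hsR u hus v hv.2 (Ne.symm hv.1)⟩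
    · rw [Finset.card_erase_of_mem hus, h3 s hsR]
  · intro s hs t ht hst
    simp only [Finset.coe_filter, Set.mem_setOf_eq] at hs ht
    simp only at hst
    have : insert u (s.erase u) = insert u (t.erase u) := by rw [hst]
    rwa [Finset.insert_erase hs.2, Finset.insert_erase ht.2] at this

end Tri

section Tri2
variable {n : ℕ} (R : Finset (Finset (Fin n)))

set_option maxHeartbeats 1000000 in
lemma tri_bound (h3 : ∀ s ∈ R, s.card = 3)
    (hcov : ∀ s ∈ R, ∀ u ∈ s, ∀ v ∈ s, u ≠ v → ∃ e ∈ coveredPairs R, e.val = s(u, v)) :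
    (R.card : ℝ) ≤ 2 * ((coveredPairs R).card : ℝ) * Real.sqrt ((coveredPairs R).card) := by
  classical
  set p := (coveredPairs R).card with hp
  set D := Nat.sqrt (2 * p) with hD
  -- low part
  set L := (Finset.univ : Finset (Fin n)).filter (fun u => (nbr R u).card ≤ D) with hL
  set Rlow := R.filter (fun s => ∃ u ∈ s, (nbr R u).card ≤ D) with hRlow
  have hlow : 2 * Rlow.card ≤ 2 * (D * p) := by
    have hsub : Rlow ⊆ L.biUnion (fun u => R.filter (fun s => u ∈ s)) := by
      intro s hs
      simp only [hRlow, Finset.mem_filter] at hs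
      obtain ⟨hsR, u, hus, hu⟩ := hs
      rw [Finset.mem_biUnion]
      exact ⟨u, by simp [hL, hu], by simp [Finset.mem_filter, hsR, hus]⟩
    have h1 : Rlow.card ≤ ∑ u ∈ L, (R.filter (fun s => u ∈ s)).card :=
      (Finset.card_le_card hsub).trans (Finset.card_biUnion_le)
    have h2 : ∀ u ∈ L, 2 * (R.filter (fun s => u ∈ s)).card ≤ D * (nbr R u).card := by
      intro u hu
      have ht := tri_through_le R h3 hcov u
      have h4 : 2 * (R.filter (fun s => u ∈ s)).card ≤ 2 * ((nbr R u).card.choose 2) := by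
        omega
      rw [two_mul_choose_two] at h4
      have hud : (nbr R u).card ≤ D := by simpa [hL] using hu
      have h5 : (nbr R u).card * ((nbr R u).card - 1) ≤ D * (nbr R u).card :=
        calc (nbr R u).card * ((nbr R u).card - 1)
            = ((nbr R u).card - 1) * (nbr R u).card := Nat.mul_comm _ _
          _ ≤ D * (nbr R u).card := Nat.mul_le_mul_right _ (by omega)
      omega
    have h6 : ∑ u ∈ L, (nbr R u).card ≤ 2 * p := by
      calc ∑ u ∈ L, (nbr R u).card ≤ ∑ u : Fin n, (nbr R u).card :=
            Finset.sum_le_sum_of_subset (Finset.subset_univ L)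
        _ ≤ 2 * p := sum_deg_le R
    calc 2 * Rlow.card ≤ 2 * ∑ u ∈ L, (R.filter (fun s => u ∈ s)).card := by omega
      _ = ∑ u ∈ L, 2 * (R.filter (fun s => u ∈ s)).card := by rw [Finset.mul_sum]
      _ ≤ ∑ u ∈ L, D * (nbr R u).card := Finset.sum_le_sum h2
      _ = D * ∑ u ∈ L, (nbr R u).card := by rw [Finset.mul_sum]
      _ ≤ D * (2 * p) := Nat.mul_le_mul_left _ h6
      _ = 2 * (D * p) := by ring
  -- high part
  set H := (Finset.univ : Finset (Fin n)).filter (fun u => D < (nbr R u).card) with hH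
  set Rhigh := R.filter (fun s => ¬ ∃ u ∈ s, (nbr R u).card ≤ D) with hRhigh
  have hhigh : 6 * Rhigh.card ≤ H.card * H.card * H.card := by
    have hsub : Rhigh ⊆ Finset.powersetCard 3 H := by
      intro s hs
      simp only [hRhigh, Finset.mem_filter] at hs
      rw [Finset.mem_powersetCard]
      refine ⟨fun u hu => ?_, h3 s hs.1⟩
      simp only [hH, Finset.mem_filter, Finset.mem_univ, true_and]
      by_contra hc
      exact hs.2 ⟨u, hu, by omega⟩
    have hcard := Finset.card_le_card hsub
    rw [Finset.card_powersetCard] at hcard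
    have h7 := six_mul_choose_three H.card
    have h8 : H.card * (H.card - 1) * (H.card - 2) ≤ H.card * H.card * H.card :=
      Nat.mul_le_mul (Nat.mul_le_mul_left _ (by omega)) (by omega)
    omega
  have hHD : H.card * (D + 1) ≤ 2 * p := by
    calc H.card * (D + 1) = ∑ _u ∈ H, (D + 1) := by
          rw [Finset.sum_const, smul_eq_mul, Nat.mul_comm]
      _ ≤ ∑ u ∈ H, (nbr R u).card := Finset.sum_le_sum (fun u hu => by
          simp only [hH, Finset.mem_filter] at hu; omega)
      _ ≤ ∑ u : Fin n, (nbr R u).card := Finset.sum_le_sum_of_subset (Finset.subset_univ H)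
      _ ≤ 2 * p := sum_deg_le R
  -- combine in ℕ
  have hsplit : R.card ≤ Rlow.card + Rhigh.card := by
    have hu : Rlow ∪ Rhigh = R := Finset.filter_union_filter_not_eq _ R
    calc R.card = (Rlow ∪ Rhigh).card := by rw [hu]
      _ ≤ Rlow.card + Rhigh.card := Finset.card_union_le _ _
  have hnat : 6 * R.card ≤ 6 * (D * p) + H.card * H.card * H.card := by omega
  -- pass to the reals
  set b := Real.sqrt (p : ℝ) with hb
  set c := Real.sqrt (2 * (p : ℝ)) with hcdef
  have hpn0 : (0:ℝ) ≤ (p:ℝ) := Nat.cast_nonneg _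
  have hpn2 : (0:ℝ) ≤ 2 * (p:ℝ) := by linarith
  have hb2 : b ^ 2 = (p : ℝ) := Real.sq_sqrt hpn0
  have hc2 : c ^ 2 = 2 * (p : ℝ) := Real.sq_sqrt hpn2
  have hbn : (0:ℝ) ≤ b := Real.sqrt_nonneg _
  have hcn : (0:ℝ) ≤ c := Real.sqrt_nonneg _
  have hpn : (0:ℝ) ≤ (p:ℝ) := Nat.cast_nonneg _
  have hc' : (D : ℝ) ≤ c := by
    rw [hcdef, show ((D : ℝ)) = Real.sqrt ((D : ℝ)^2) from (Real.sqrt_sq (Nat.cast_nonneg D)).symm]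
    apply Real.sqrt_le_sqrt
    have h9 := Nat.sqrt_le' (2 * p)
    have : ((D^2 : ℕ) : ℝ) ≤ ((2 * p : ℕ) : ℝ) := by exact_mod_cast h9
    push_cast at this ⊢
    linarith
  have hhc : (H.card : ℝ) ≤ c := by
    have h1 : (H.card : ℝ) * ((D : ℝ) + 1) ≤ 2 * (p:ℝ) := by exact_mod_cast hHD
    have hcb : c ≤ (D:ℝ) + 1 := by
      have hD1 : (0:ℝ) ≤ (D:ℝ) + 1 := by have := Nat.cast_nonneg (α := ℝ) D; linarith
      rw [hcdef, show ((D : ℝ) + 1) = Real.sqrt (((D : ℝ)+1)^2) from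
        (Real.sqrt_sq hD1).symm]
      apply Real.sqrt_le_sqrt
      have h9 := Nat.lt_succ_sqrt' (2 * p)
      have : ((2 * p : ℕ) : ℝ) ≤ (((D+1)^2 : ℕ) : ℝ) := by exact_mod_cast h9.le
      push_cast at this ⊢
      linarith
    nlinarith [Nat.cast_nonneg (α := ℝ) H.card]
  have hcb45 : c ≤ 1.45 * b := by
    have h1 : (2*(p:ℝ)) ≤ (1.45*b)^2 := by nlinarith
    calc c = Real.sqrt (2*(p:ℝ)) := by rw [hcdef]
      _ ≤ Real.sqrt ((1.45*b)^2) := Real.sqrt_le_sqrt h1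
      _ = 1.45*b := Real.sqrt_sq (by linarith)
  have hreal : 6 * (R.card : ℝ) ≤ 6 * ((D:ℝ) * p) + (H.card:ℝ) * H.card * H.card := by
    exact_mod_cast hnat
  have hH3 : (H.card:ℝ) * H.card * H.card ≤ c^3 := by
    have := pow_le_pow_left₀ (Nat.cast_nonneg (α := ℝ) H.card) hhc 3
    calc (H.card:ℝ) * H.card * H.card = (H.card:ℝ)^3 := by ring
      _ ≤ c^3 := this
  have hc3 : c^3 = 2 * (p:ℝ) * c := by
    calc c^3 = c^2 * c := by ring
      _ = 2 * (p:ℝ) * c := by rw [hc2]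
  have hDp : (D:ℝ) * p ≤ c * p := mul_le_mul_of_nonneg_right hc' hpn
  have hpc : (p:ℝ) * c ≤ (p:ℝ) * (1.45 * b) := mul_le_mul_of_nonneg_left hcb45 hpn
  have hbp : b^3 = b * (p:ℝ) := by
    calc b^3 = b * b^2 := by ring
      _ = b * (p:ℝ) := by rw [hb2]
  nlinarith [hreal, hH3, hc3, hDp, hpc]
end Tri2


lemma entropy_le_logb_card {ι : Type*} (G : Finset ι) (q : ι → ℝ)
    (hq0 : ∀ i ∈ G, 0 ≤ q i) (hsum : ∑ i ∈ G, q i = 1) :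
    -(Real.logb 2 G.card) ≤ ∑ i ∈ G, q i * Real.logb 2 (q i) := by
  have h2 : (0:ℝ) < Real.log 2 := Real.log_pos (by norm_num)
  have h := entropy_le_log_card G q hq0 hsum
  have key : ∑ i ∈ G, q i * Real.logb 2 (q i)
      = (∑ i ∈ G, q i * Real.log (q i)) / Real.log 2 := by
    rw [Finset.sum_div]
    exact Finset.sum_congr rfl fun i _ => by rw [Real.logb]; ring
  rw [key, Real.logb, ← neg_div]
  exact (div_le_div_iff_of_pos_right h2).mpr h

lemma inner_ge {n M : ℕ} (hMcard : Fintype.card (EdgeIdx n) = M)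
    (R : Finset (Finset (Fin n))) (pr : (EdgeIdx n → Bool) → ℝ) (pR : ℝ)
    (hnn : ∀ g, 0 ≤ pr g) (hsum : ∑ g, pr g = pR)
    (hsupp : ∀ g, pr g ≠ 0 → ∀ e ∈ coveredPairs R, g e = true) :
    pR * ((coveredPairs R).card : ℝ) ≤
      ∑ g, pr g * Real.logb 2 (pr g / ((1/2:ℝ)^M * pR)) := by
  classical
  set p' := (coveredPairs R).card with hp'
  have hp'M : p' ≤ M := by rw [← hMcard]; exact Finset.card_le_univ _
  set G := Finset.univ.filter
      (fun g : EdgeIdx n → Bool => ∀ e ∈ coveredPairs R, g e = true) with hG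
  have hGcard : G.card = 2 ^ (M - p') := by rw [hG, count_all_true, hMcard]
  have hGz : ∀ g ∉ G, pr g = 0 := by
    intro g hg
    by_contra hne
    apply hg
    simp only [hG, Finset.mem_filter, Finset.mem_univ, true_and]
    exact hsupp g hne
  have hsumG : ∑ g ∈ G, pr g = pR := by
    rw [← hsum]
    exact Finset.sum_subset (Finset.subset_univ G) (fun g _ hg => hGz g hg)
  have hredG : ∑ g, pr g * Real.logb 2 (pr g / ((1/2:ℝ)^M * pR))
      = ∑ g ∈ G, pr g * Real.logb 2 (pr g / ((1/2:ℝ)^M * pR)) := by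
    exact (Finset.sum_subset (Finset.subset_univ G)
      (fun g _ hg => by rw [hGz g hg, zero_mul])).symm
  rw [hredG]
  rcases eq_or_lt_of_le (by rw [← hsum]; exact Finset.sum_nonneg fun g _ => hnn g :
      (0:ℝ) ≤ pR) with hpR0 | hpRpos
  · -- pR = 0 : everything vanishes
    have hz : ∀ g, pr g = 0 := by
      intro g
      have := Finset.sum_nonneg (fun g (_ : g ∈ (Finset.univ : Finset (EdgeIdx n → Bool))) => hnn g)
      by_contra hne
      have hgpos : 0 < pr g := lt_of_le_of_ne (hnn g) (Ne.symm hne)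
      have : 0 < ∑ g, pr g := Finset.sum_pos' (fun g _ => hnn g) ⟨g, Finset.mem_univ g, hgpos⟩
      rw [hsum, ← hpR0] at this
      exact lt_irrefl _ this
    rw [← hpR0]
    simp [hz]
  · -- pR > 0
    set c := ((1/2:ℝ)^M) with hc
    have hcpos : 0 < c := by positivity
    set q := fun g => pr g / pR with hq
    have hqnn : ∀ g ∈ G, 0 ≤ q g := fun g _ => div_nonneg (hnn g) hpRpos.le
    have hqsum : ∑ g ∈ G, q g = 1 := by
      rw [hq, ← Finset.sum_div, hsumG, div_self hpRpos.ne']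
    have hlogc : Real.logb 2 c = -(M : ℝ) := by
      rw [hc, one_div, Real.logb_pow, Real.logb_inv,
        Real.logb_self_eq_one (by norm_num)]
      ring
    have hterm : ∀ g ∈ G, pr g * Real.logb 2 (pr g / (c * pR))
        = pR * (q g * Real.logb 2 (q g) + q g * M) := by
      intro g _
      rcases eq_or_lt_of_le (hnn g) with h0 | hpos
      · rw [← h0]
        have : q g = 0 := by rw [hq]; simp [← h0]
        rw [this]
        simp
      · have hqpos : 0 < q g := div_pos hpos hpRpos
        have harg : pr g / (c * pR) = q g / c := by
          show pr g / (c * pR) = pr g / pR / c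
          rw [div_div, mul_comm pR c]
        rw [harg, Real.logb_div hqpos.ne' hcpos.ne', hlogc]
        have hpr : pr g = pR * q g := by
          show pr g = pR * (pr g / pR)
          rw [mul_comm, div_mul_cancel₀ _ hpRpos.ne']
        rw [hpr]; ring
    rw [Finset.sum_congr rfl hterm]
    have hent := entropy_le_logb_card G q hqnn hqsum
    have hlogG : Real.logb 2 (G.card : ℝ) = ((M - p' : ℕ) : ℝ) := by
      rw [hGcard]
      push_cast
      rw [Real.logb_pow, Real.logb_self_eq_one (by norm_num)]
      simp
    have hsum2 : ∑ g ∈ G, pR * (q g * Real.logb 2 (q g) + q g * M)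
        = pR * ((∑ g ∈ G, q g * Real.logb 2 (q g)) + M) := by
      rw [← Finset.mul_sum, Finset.sum_add_distrib, ← Finset.sum_mul, hqsum, one_mul]
    rw [hsum2]
    have hMp : (M : ℝ) - ((M - p' : ℕ) : ℝ) = (p' : ℝ) := by
      rw [Nat.cast_sub hp'M]; ring
    have : (p' : ℝ) ≤ (∑ g ∈ G, q g * Real.logb 2 (q g)) + M := by
      rw [hlogG] at hent
      linarith
    calc pR * (p' : ℝ) ≤ pR * ((∑ g ∈ G, q g * Real.logb 2 (q g)) + M) :=
          mul_le_mul_of_nonneg_left this hpRpos.le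
      _ = _ := rfl


/-- the potential edges inside a vertex set `s` -/
def edgesOf {n : ℕ} (s : Finset (Fin n)) : Finset (EdgeIdx n) :=
  Finset.univ.filter fun e => e.val ∈ s.sym2

set_option maxHeartbeats 800000 in
lemma edgesOf_card_three {n : ℕ} (s : Finset (Fin n)) (h3 : s.card = 3) :
    (edgesOf s).card = 3 := by
  classical
  obtain ⟨a, b, c, hab, hac, hbc, rfl⟩ := Finset.card_eq_three.mp h3
  have h1 : ¬ (s(a,b) : Sym2 (Fin n)).IsDiag := by simp [Sym2.mk_isDiag_iff, hab]
  have h2 : ¬ (s(a,c) : Sym2 (Fin n)).IsDiag := by simp [Sym2.mk_isDiag_iff, hac]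
  have h3' : ¬ (s(b,c) : Sym2 (Fin n)).IsDiag := by simp [Sym2.mk_isDiag_iff, hbc]
  have heq : edgesOf {a, b, c}
      = {(⟨s(a,b), h1⟩ : EdgeIdx n), ⟨s(a,c), h2⟩, ⟨s(b,c), h3'⟩} := by
    ext ⟨x, hx⟩
    induction x using Sym2.ind with
    | h u v =>
      have huv : u ≠ v := by
        intro h; exact hx (by simp [Sym2.mk_isDiag_iff, h])
      simp only [edgesOf, Finset.mem_filter, Finset.mem_univ, true_and,
        Finset.mk_mem_sym2_iff, Finset.mem_insert, Finset.mem_singleton,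
        Subtype.mk.injEq, Sym2.eq_iff]
      constructor
      · rintro ⟨ha | ha | ha, hb | hb | hb⟩ <;> subst ha <;> subst hb <;> tauto
      · rintro ((⟨rfl, rfl⟩ | ⟨rfl, rfl⟩) | (⟨rfl, rfl⟩ | ⟨rfl, rfl⟩) |
          (⟨rfl, rfl⟩ | ⟨rfl, rfl⟩)) <;> tauto
  rw [heq]
  refine Finset.card_eq_three.mpr ⟨_, _, _, ?_, ?_, ?_, rfl⟩ <;>
    simp only [ne_eq, Subtype.mk.injEq, Sym2.eq_iff] <;> tauto

lemma isTriangle_iff_edges {n : ℕ} (g : EdgeIdx n → Bool) (s : Finset (Fin n))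
    (h3 : s.card = 3) :
    isTriangle g s ↔ ∀ e ∈ edgesOf s, g e = true := by
  constructor
  · rintro ⟨-, hadj⟩ ⟨x, hx⟩ he
    induction x using Sym2.ind with
    | h u v =>
      simp only [edgesOf, Finset.mem_filter, Finset.mem_univ, true_and,
        Finset.mk_mem_sym2_iff] at he
      have huv : u ≠ v := fun h => hx (by simp [Sym2.mk_isDiag_iff, h])
      obtain ⟨e', he'v, he'⟩ := hadj u he.1 v he.2 huv
      have : e' = ⟨s(u,v), hx⟩ := Subtype.ext he'v
      rwa [this] at he'
  · intro h
    refine ⟨h3, fun u hu v hv huv => ?_⟩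
    have hd : ¬ (s(u,v) : Sym2 (Fin n)).IsDiag := by simp [Sym2.mk_isDiag_iff, huv]
    refine ⟨⟨s(u,v), hd⟩, rfl, h _ ?_⟩
    simp only [edgesOf, Finset.mem_filter, Finset.mem_univ, true_and,
      Finset.mk_mem_sym2_iff]
    exact ⟨hu, hv⟩


lemma prob_mem_finset {Ω α : Type*} [MeasurableSpace Ω] (μ : Measure Ω)
    [IsProbabilityMeasure μ] [DecidableEq α]
    (X : Ω → α) (hmeas : ∀ a : α, MeasurableSet {ω | X ω = a}) (A : Finset α) :
    MeasurableSet {ω | X ω ∈ A} ∧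
      (μ {ω | X ω ∈ A}).toReal = ∑ a ∈ A, (μ {ω | X ω = a}).toReal := by
  have hset : {ω | X ω ∈ A} = ⋃ a ∈ A, {ω | X ω = a} := by
    ext ω; simp
  have hdisj : (A : Set α).PairwiseDisjoint (fun a => {ω | X ω = a}) := by
    intro a _ b _ hab
    exact Set.disjoint_left.mpr fun ω h1 h2 => hab (by
      simp only [Set.mem_setOf_eq] at h1 h2; rw [← h1, ← h2])
  constructor
  · rw [hset]
    exact MeasurableSet.biUnion A.countable_toSet (fun a _ => hmeas a)
  · rw [hset, measure_biUnion_finset hdisj (fun a _ => hmeas a)]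
    exact ENNReal.toReal_sum (fun a _ => measure_ne_top μ _)

end AuxLemmas

set_option maxHeartbeats 2000000 in
/-- **Key inequality in the proof of Theorem 4 of the paper.**
Let `V = {0,…,n-1}` with `n ≥ 3`, let `E` be the tuple of independent uniform
`{0,1}`-valued edge indicators of the random graph `G = G(n, 1/2)`, and let
`N = n(n-1)(n-2)/6`.  Let `T₀, …, T_{n-1}` be random variables, each taking values in
finite sets of 3-element subsets of `V`, such that almost surely every element of every
`T_i` is a triangle of `G`, and such that with probability at least `1 - 1/32` the
union `T₀ ∪ ⋯ ∪ T_{n-1}` equals the set of all triangles of `G`.  Let `w` be the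
(random) smallest index `i` maximizing `|T_i|` and `S = T_w`.  Then
`I(E; S) ≥ (√2/3) (N/(16n))^{2/3} (1/15 - 1/32)`; in particular `I(E; S) = Ω(n^{4/3})`. -/
theorem mutualInfo_lower_bound_listing
    {Ω : Type*} [MeasurableSpace Ω] (μ : Measure Ω) [IsProbabilityMeasure μ]
    (n M : ℕ) (hn : 3 ≤ n) (hM : M = n * (n - 1) / 2)
    (hMcard : Fintype.card (EdgeIdx n) = M)
    (N : ℝ) (hN : N = (n : ℝ) * ((n : ℝ) - 1) * ((n : ℝ) - 2) / 6)
    (E : Ω → (EdgeIdx n → Bool))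
    (hEmeas : ∀ g : EdgeIdx n → Bool, MeasurableSet {ω | E ω = g})
    (hEdist : ∀ g : EdgeIdx n → Bool,
      (μ {ω | E ω = g}).toReal = (1 / 2 : ℝ) ^ M)
    (T : Fin n → Ω → Finset (Finset (Fin n)))
    (hTtri : ∀ᵐ ω ∂μ, ∀ i : Fin n, ∀ s ∈ T i ω, isTriangle (E ω) s)
    (hTlist : 1 - 1 / 32 ≤ (μ {ω | Finset.univ.biUnion (fun i : Fin n => T i ω) =
      Finset.univ.filter fun s : Finset (Fin n) => isTriangle (E ω) s}).toReal)
    (w : Ω → Fin n)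
    (hwmax : ∀ ω : Ω, ∀ i : Fin n, (T i ω).card ≤ (T (w ω) ω).card)
    (hwmin : ∀ ω : Ω, ∀ i : Fin n, (T i ω).card = (T (w ω) ω).card → w ω ≤ i)
    (S : Ω → Finset (Finset (Fin n))) (hS : ∀ ω : Ω, S ω = T (w ω) ω)
    (hSmeas : ∀ R : Finset (Finset (Fin n)), MeasurableSet {ω | S ω = R}) :
    Real.sqrt 2 / 3 * (N / (16 * (n : ℝ))) ^ ((2 : ℝ) / 3) * (1 / 15 - 1 / 32) ≤
      mutualInfo μ E S := by
  classical
  -- basic numeric facts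
  have hn3 : (3:ℝ) ≤ (n:ℝ) := by exact_mod_cast hn
  have hn0 : (0:ℝ) < (n:ℝ) := by linarith
  have hNpos : 0 < N := by
    rw [hN]
    have h1 : (0:ℝ) < (n:ℝ) := hn0
    have h2 : (0:ℝ) < (n:ℝ) - 1 := by linarith
    have h3 : (0:ℝ) < (n:ℝ) - 2 := by linarith
    have := mul_pos (mul_pos h1 h2) h3
    linarith
  have hM3 : 3 ≤ M := by
    have h6 : 6 ≤ n * (n-1) := by
      have := Nat.mul_le_mul (show 3 ≤ n from hn) (show 2 ≤ n - 1 by omega)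
      omega
    omega
  have hcpos : (0:ℝ) < (1/2:ℝ)^M := by positivity
  -- triangle counting function on graphs
  set tcount : (EdgeIdx n → Bool) → ℕ :=
    fun g => (Finset.univ.filter (fun s => isTriangle g s)).card with htco
  set S3 : Finset (Finset (Fin n)) :=
    Finset.univ.filter (fun s : Finset (Fin n) => s.card = 3) with hS3
  have hS3card : S3.card = n.choose 3 := by
    have he : S3 = Finset.powersetCard 3 Finset.univ := by
      ext s
      simp [hS3, Finset.mem_powersetCard, Finset.subset_univ]
    rw [he, Finset.card_powersetCard, Finset.card_univ, Fintype.card_fin]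
  have htc_eq : ∀ g, tcount g = (S3.filter (fun s => isTriangle g s)).card := by
    intro g
    rw [htco]
    simp only
    congr 1
    rw [hS3, Finset.filter_filter]
    refine Finset.filter_congr fun s _ => ?_
    constructor
    · intro h; exact ⟨h.1, h⟩
    · intro h; exact h.2
  have hcount3 : ∀ s : Finset (Fin n), s.card = 3 →
      (Finset.univ.filter (fun g : EdgeIdx n → Bool => isTriangle g s)).card
        = 2^(M-3) := by
    intro s h3
    have h1 : Finset.univ.filter (fun g : EdgeIdx n → Bool => isTriangle g s)
        = Finset.univ.filter (fun g : EdgeIdx n → Bool => ∀ e ∈ edgesOf s, g e = true) :=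
      Finset.filter_congr (fun g _ => isTriangle_iff_edges g s h3)
    rw [h1, count_all_true, hMcard, edgesOf_card_three s h3]
  have hExp : ∑ g : EdgeIdx n → Bool, tcount g = n.choose 3 * 2^(M-3) := by
    calc ∑ g : EdgeIdx n → Bool, tcount g
        = ∑ g : EdgeIdx n → Bool, ∑ s ∈ S3, if isTriangle g s then 1 else 0 := by
          refine Finset.sum_congr rfl fun g _ => ?_
          rw [htc_eq g, Finset.card_filter]
      _ = ∑ s ∈ S3, ∑ g : EdgeIdx n → Bool, if isTriangle g s then 1 else 0 :=
          Finset.sum_comm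
      _ = ∑ s ∈ S3, 2^(M-3) := by
          refine Finset.sum_congr rfl fun s hs => ?_
          rw [← Finset.card_filter]
          refine hcount3 s ?_
          simpa [hS3] using hs
      _ = n.choose 3 * 2^(M-3) := by
          rw [Finset.sum_const, hS3card, smul_eq_mul]
  have htle : ∀ g, tcount g ≤ n.choose 3 := by
    intro g
    calc tcount g = (S3.filter (fun s => isTriangle g s)).card := htc_eq g
      _ ≤ S3.card := Finset.card_filter_le _ _
      _ = n.choose 3 := hS3card
  have hchooseN : ((n.choose 3 : ℕ) : ℝ) = N := by
    have h6 := six_mul_choose_three n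
    have hcast : (6:ℝ) * ((n.choose 3 : ℕ) : ℝ) = (n:ℝ) * ((n:ℝ)-1) * ((n:ℝ)-2) := by
      have := congrArg (Nat.cast : ℕ → ℝ) h6
      push_cast [Nat.cast_sub (show 1 ≤ n by omega), Nat.cast_sub (show 2 ≤ n by omega)]
        at this
      convert this using 2 <;> push_cast <;> ring
    rw [hN]; linarith
  have hc8 : (1/2:ℝ)^M * (2:ℝ)^(M-3) = 1/8 := by
    have hsplit : (2:ℝ)^M = (2:ℝ)^(M-3) * 2^3 := by
      rw [← pow_add, Nat.sub_add_cancel hM3]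
    rw [one_div, inv_pow, hsplit, mul_inv]
    have h2 : ((2:ℝ)^(M-3))⁻¹ * ((2:ℝ)^3)⁻¹ * (2:ℝ)^(M-3)
        = ((2:ℝ)^3)⁻¹ * (((2:ℝ)^(M-3))⁻¹ * (2:ℝ)^(M-3)) := by ring
    rw [h2, inv_mul_cancel₀ (by positivity : ((2:ℝ)^(M-3)) ≠ 0)]
    norm_num
  have hEreal : ∑ g : EdgeIdx n → Bool, (1/2:ℝ)^M * (tcount g : ℝ) = N / 8 := by
    rw [← Finset.mul_sum]
    have h2 : ∑ g : EdgeIdx n → Bool, (tcount g : ℝ)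
        = ((n.choose 3 : ℕ) : ℝ) * (2:ℝ)^(M-3) := by
      rw [← Nat.cast_sum]
      exact_mod_cast congrArg (Nat.cast : ℕ → ℝ) hExp
    rw [h2]
    calc (1/2:ℝ)^M * (((n.choose 3 : ℕ):ℝ) * (2:ℝ)^(M-3))
        = ((1/2:ℝ)^M * (2:ℝ)^(M-3)) * ((n.choose 3 : ℕ):ℝ) := by ring
      _ = N / 8 := by rw [hc8, hchooseN]; ring
  -- Markov
  set Bf : Finset (EdgeIdx n → Bool) :=
    Finset.univ.filter (fun g => N/16 ≤ (tcount g : ℝ)) with hBf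
  set qB : ℝ := ∑ _g ∈ Bf, (1/2:ℝ)^M with hqB
  have htot : ∑ _g : EdgeIdx n → Bool, (1/2:ℝ)^M = 1 := by
    rw [Finset.sum_const, Finset.card_univ, Fintype.card_fun, hMcard,
      Fintype.card_bool, nsmul_eq_mul]
    push_cast
    rw [one_div, inv_pow, mul_inv_cancel₀ (by positivity : ((2:ℝ)^M) ≠ 0)]
  have hsplitc : qB + ∑ _g ∈ Finset.univ.filter
      (fun g => ¬ (N/16 ≤ (tcount g : ℝ))), (1/2:ℝ)^M = 1 := by
    rw [hqB, hBf, Finset.sum_filter_add_sum_filter_not]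
    exact htot
  have hMarkov : 1/15 ≤ qB := by
    have hub : ∑ g : EdgeIdx n → Bool, (1/2:ℝ)^M * (tcount g : ℝ)
        ≤ qB * N + (1 - qB) * (N/16) := by
      rw [← Finset.sum_filter_add_sum_filter_not Finset.univ
        (fun g => N/16 ≤ (tcount g : ℝ))]
      have hB1 : ∑ g ∈ Bf, (1/2:ℝ)^M * (tcount g : ℝ) ≤ qB * N := by
        rw [hqB, Finset.sum_mul]
        refine Finset.sum_le_sum fun g hg => ?_
        have ht : (tcount g : ℝ) ≤ N := by
          rw [← hchooseN]; exact_mod_cast htle g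
        exact mul_le_mul_of_nonneg_left ht hcpos.le
      have hB2 : ∑ g ∈ Finset.univ.filter (fun g => ¬ (N/16 ≤ (tcount g : ℝ))),
          (1/2:ℝ)^M * (tcount g : ℝ) ≤ (1 - qB) * (N/16) := by
        have h1mq : ∑ _g ∈ Finset.univ.filter
            (fun g => ¬ (N/16 ≤ (tcount g : ℝ))), (1/2:ℝ)^M = 1 - qB := by
          linarith [hsplitc]
        rw [← h1mq, Finset.sum_mul]
        refine Finset.sum_le_sum fun g hg => ?_
        have hg' : (tcount g : ℝ) ≤ N/16 := by
          simp only [Finset.mem_filter, Finset.mem_univ, true_and, not_le] at hg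
          exact hg.le
        exact mul_le_mul_of_nonneg_left hg' hcpos.le
      exact add_le_add hB1 hB2
    have hNq : N * (1/15) ≤ N * qB := by nlinarith [hEreal, hub]
    have := (mul_le_mul_iff_right₀ hNpos).mp hNq
    linarith
  -- events
  obtain ⟨hBmeas, hBval⟩ := prob_mem_finset μ E hEmeas Bf
  have hBval' : (μ {ω | E ω ∈ Bf}).toReal = qB := by
    rw [hBval, hqB]
    exact Finset.sum_congr rfl fun g _ => hEdist g
  set 𝓡 : Finset (Finset (Finset (Fin n))) :=
    Finset.univ.filter (fun R : Finset (Finset (Fin n)) =>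
      N/(16*(n:ℝ)) ≤ (R.card : ℝ)) with hRR
  obtain ⟨hCmeas, hCval⟩ := prob_mem_finset μ S hSmeas 𝓡
  have hincl : {ω | E ω ∈ Bf} ∩ {ω | S ω ∈ 𝓡}ᶜ ⊆
      {ω | Finset.univ.biUnion (fun i : Fin n => T i ω) =
        Finset.univ.filter fun s : Finset (Fin n) => isTriangle (E ω) s}ᶜ := by
    rintro ω ⟨hB, hC⟩ hA
    simp only [Set.mem_setOf_eq] at hA
    apply hC
    simp only [Set.mem_setOf_eq, hRR, Finset.mem_filter, Finset.mem_univ, true_and]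
    have h2 : tcount (E ω) = (Finset.univ.biUnion (fun i : Fin n => T i ω)).card := by
      rw [htco]; simp only; rw [hA]
    have h3 : (Finset.univ.biUnion (fun i : Fin n => T i ω)).card
        ≤ ∑ i : Fin n, (T i ω).card := Finset.card_biUnion_le
    have h4 : ∑ i : Fin n, (T i ω).card ≤ n * (S ω).card := by
      rw [hS ω]
      calc ∑ i : Fin n, (T i ω).card ≤ ∑ _i : Fin n, (T (w ω) ω).card :=
            Finset.sum_le_sum (fun i _ => hwmax ω i)
        _ = n * (T (w ω) ω).card := by
            rw [Finset.sum_const, Finset.card_univ, Fintype.card_fin, smul_eq_mul]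
    have hBω : N/16 ≤ (tcount (E ω) : ℝ) := by
      have := hB
      simp only [Set.mem_setOf_eq, hBf, Finset.mem_filter, Finset.mem_univ,
        true_and] at this
      exact this
    have h5 : (tcount (E ω) : ℝ) ≤ (n:ℝ) * ((S ω).card : ℝ) := by
      exact_mod_cast (h2 ▸ (h3.trans h4) : tcount (E ω) ≤ n * (S ω).card)
    rw [show N/(16*(n:ℝ)) = (N/16)/(n:ℝ) by ring, div_le_iff₀ hn0]
    calc N/16 ≤ (n:ℝ) * ((S ω).card : ℝ) := le_trans hBω h5
      _ = ((S ω).card : ℝ) * (n:ℝ) := by ring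
  have hBCm : MeasurableSet ({ω | E ω ∈ Bf} ∩ {ω | S ω ∈ 𝓡}ᶜ) :=
    hBmeas.inter hCmeas.compl
  have h32 : (μ ({ω | E ω ∈ Bf} ∩ {ω | S ω ∈ 𝓡}ᶜ)).toReal ≤ 1/32 := by
    have hmono : μ {ω | Finset.univ.biUnion (fun i : Fin n => T i ω) =
        Finset.univ.filter fun s : Finset (Fin n) => isTriangle (E ω) s}
        ≤ μ (({ω | E ω ∈ Bf} ∩ {ω | S ω ∈ 𝓡}ᶜ)ᶜ) :=
      measure_mono (fun ω hA hX => hincl hX hA)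
    have h1 : (μ {ω | Finset.univ.biUnion (fun i : Fin n => T i ω) =
        Finset.univ.filter fun s : Finset (Fin n) => isTriangle (E ω) s}).toReal
        ≤ (μ (({ω | E ω ∈ Bf} ∩ {ω | S ω ∈ 𝓡}ᶜ)ᶜ)).toReal :=
      ENNReal.toReal_mono (measure_ne_top μ _) hmono
    have h2 : (μ (({ω | E ω ∈ Bf} ∩ {ω | S ω ∈ 𝓡}ᶜ)ᶜ)).toReal
        = 1 - (μ ({ω | E ω ∈ Bf} ∩ {ω | S ω ∈ 𝓡}ᶜ)).toReal := by
      rw [prob_compl_eq_one_sub hBCm,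
        ENNReal.toReal_sub_of_le prob_le_one ENNReal.one_ne_top, ENNReal.toReal_one]
    linarith [hTlist, h1, h2]
  have hsplitBC : (μ {ω | E ω ∈ Bf}).toReal ≤
      (μ ({ω | E ω ∈ Bf} ∩ {ω | S ω ∈ 𝓡})).toReal +
      (μ ({ω | E ω ∈ Bf} ∩ {ω | S ω ∈ 𝓡}ᶜ)).toReal := by
    have hU : {ω | E ω ∈ Bf} = ({ω | E ω ∈ Bf} ∩ {ω | S ω ∈ 𝓡}) ∪
        ({ω | E ω ∈ Bf} ∩ {ω | S ω ∈ 𝓡}ᶜ) := (Set.inter_union_compl _ _).symm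
    calc (μ {ω | E ω ∈ Bf}).toReal
        ≤ ((μ ({ω | E ω ∈ Bf} ∩ {ω | S ω ∈ 𝓡})) +
           (μ ({ω | E ω ∈ Bf} ∩ {ω | S ω ∈ 𝓡}ᶜ))).toReal := by
          refine ENNReal.toReal_mono ?_ ?_
          · exact ENNReal.add_ne_top.mpr ⟨measure_ne_top μ _, measure_ne_top μ _⟩
          · conv_lhs => rw [hU]
            exact measure_union_le _ _
      _ = _ := ENNReal.toReal_add (measure_ne_top μ _) (measure_ne_top μ _)
  have hCge : 1/15 - 1/32 ≤ ∑ R ∈ 𝓡, (μ {ω | S ω = R}).toReal := by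
    have h5 : (μ ({ω | E ω ∈ Bf} ∩ {ω | S ω ∈ 𝓡})).toReal
        ≤ (μ {ω | S ω ∈ 𝓡}).toReal :=
      ENNReal.toReal_mono (measure_ne_top μ _) (measure_mono Set.inter_subset_right)
    rw [← hCval]
    linarith [hBval', hMarkov, h32, hsplitBC, h5]
  -- per-value facts
  have hsumR : ∀ R : Finset (Finset (Fin n)),
      ∑ g : EdgeIdx n → Bool, (μ {ω | E ω = g ∧ S ω = R}).toReal
        = (μ {ω | S ω = R}).toReal := by
    intro R
    have hset : {ω | S ω = R} = ⋃ g ∈ (Finset.univ : Finset (EdgeIdx n → Bool)),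
        ({ω | E ω = g} ∩ {ω | S ω = R}) := by
      ext ω; simp
    have hdisj : ((Finset.univ : Finset (EdgeIdx n → Bool)) : Set (EdgeIdx n → Bool)).PairwiseDisjoint
        (fun g => {ω | E ω = g} ∩ {ω | S ω = R}) := by
      intro a _ b _ hab
      refine Set.disjoint_left.mpr fun ω h1 h2 => hab ?_
      rw [← h1.1, ← h2.1]
    rw [hset, measure_biUnion_finset hdisj (fun g _ => (hEmeas g).inter (hSmeas R)),
      ENNReal.toReal_sum (fun g _ => measure_ne_top μ _)]
    refine Finset.sum_congr rfl fun g _ => ?_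
    congr 1
  have hTae : μ {ω | ¬ ∀ (i : Fin n), ∀ s ∈ T i ω, isTriangle (E ω) s} = 0 :=
    ae_iff.mp hTtri
  have hsupp : ∀ (R : Finset (Finset (Fin n))) (g : EdgeIdx n → Bool),
      (μ {ω | E ω = g ∧ S ω = R}).toReal ≠ 0 → ∀ s ∈ R, isTriangle g s := by
    intro R g hne
    by_contra hbad
    push_neg at hbad
    obtain ⟨s, hsR, hnt⟩ := hbad
    apply hne
    have hsubset : {ω | E ω = g ∧ S ω = R} ⊆
        {ω | ¬ ∀ (i : Fin n), ∀ s ∈ T i ω, isTriangle (E ω) s} := by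
      rintro ω ⟨hEω, hSω⟩ hall
      have hmem : s ∈ T (w ω) ω := by rw [← hS ω, hSω]; exact hsR
      exact hnt (by rw [← hEω]; exact hall (w ω) s hmem)
    rw [measure_mono_null hsubset hTae]
    simp
  have hinner : ∀ R : Finset (Finset (Fin n)),
      (μ {ω | S ω = R}).toReal * ((coveredPairs R).card : ℝ) ≤
      ∑ g : EdgeIdx n → Bool, (μ {ω | E ω = g ∧ S ω = R}).toReal *
        Real.logb 2 ((μ {ω | E ω = g ∧ S ω = R}).toReal /
          ((1/2:ℝ)^M * (μ {ω | S ω = R}).toReal)) := by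
    intro R
    refine inner_ge hMcard R (fun g => (μ {ω | E ω = g ∧ S ω = R}).toReal)
      ((μ {ω | S ω = R}).toReal) (fun g => ENNReal.toReal_nonneg) (hsumR R) ?_
    intro g hne e he
    have htri := hsupp R g hne
    simp only [coveredPairs, Finset.mem_filter, Finset.mem_univ, true_and] at he
    obtain ⟨s, hsR, hes⟩ := he
    have hts := htri s hsR
    exact (isTriangle_iff_edges g s hts.1).mp hts e
      (by simp only [edgesOf, Finset.mem_filter, Finset.mem_univ, true_and]; exact hes)
  -- rewrite mutual information
  have hMI : mutualInfo μ E S = ∑ R : Finset (Finset (Fin n)),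
      ∑ g : EdgeIdx n → Bool, (μ {ω | E ω = g ∧ S ω = R}).toReal *
        Real.logb 2 ((μ {ω | E ω = g ∧ S ω = R}).toReal /
          ((1/2:ℝ)^M * (μ {ω | S ω = R}).toReal)) := by
    rw [mutualInfo, Finset.sum_comm]
    exact Finset.sum_congr rfl fun R _ => Finset.sum_congr rfl fun g _ => by
      rw [hEdist g]
  -- the geometric lower bound on each large R
  have hfin : ∀ R ∈ 𝓡, (μ {ω | S ω = R}).toReal *
      (Real.sqrt 2 / 3 * (N / (16 * (n:ℝ))) ^ ((2:ℝ)/3)) ≤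
      (μ {ω | S ω = R}).toReal * ((coveredPairs R).card : ℝ) := by
    intro R hR
    rcases eq_or_lt_of_le (ENNReal.toReal_nonneg : (0:ℝ) ≤ (μ {ω | S ω = R}).toReal)
      with h0 | hpos
    · rw [← h0]; simp
    · refine mul_le_mul_of_nonneg_left ?_ hpos.le
      have hex : ∃ g : EdgeIdx n → Bool, (μ {ω | E ω = g ∧ S ω = R}).toReal ≠ 0 := by
        by_contra hno
        push_neg at hno
        have hz : ∑ g : EdgeIdx n → Bool, (μ {ω | E ω = g ∧ S ω = R}).toReal = 0 :=
          Finset.sum_eq_zero (fun g _ => hno g)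
        rw [hsumR R] at hz
        rw [hz] at hpos
        exact lt_irrefl _ hpos
      obtain ⟨g, hg⟩ := hex
      have htri := hsupp R g hg
      have h3 : ∀ s ∈ R, s.card = 3 := fun s hs => (htri s hs).1
      have hcov : ∀ s ∈ R, ∀ u ∈ s, ∀ v ∈ s, u ≠ v →
          ∃ e ∈ coveredPairs R, e.val = s(u,v) := by
        intro s hs u hu v hv huv
        obtain ⟨e, hev, hge⟩ := (htri s hs).2 u hu v hv huv
        refine ⟨e, ?_, hev⟩
        simp only [coveredPairs, Finset.mem_filter, Finset.mem_univ, true_and]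
        exact ⟨s, hs, by rw [hev]; exact Finset.mk_mem_sym2_iff.mpr ⟨hu, hv⟩⟩
      have htb := tri_bound R h3 hcov
      set x : ℝ := ((coveredPairs R).card : ℝ) with hx
      have hxnn : (0:ℝ) ≤ x := Nat.cast_nonneg _
      have hτ : N/(16*(n:ℝ)) ≤ (R.card : ℝ) := by
        have := hR
        simp only [hRR, Finset.mem_filter, Finset.mem_univ, true_and] at this
        exact this
      have hτpos : 0 < N/(16*(n:ℝ)) := by positivity
      have hxpos : (0:ℝ) < x := by
        by_contra hle
        push_neg at hle
        have hx0 : x = 0 := le_antisymm hle hxnn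
        rw [hx0] at htb
        simp only [mul_zero, zero_mul, Real.sqrt_zero] at htb
        linarith [hτ, hτpos, htb]
      have h32' : 2 * x * Real.sqrt x = 2 * x ^ ((3:ℝ)/2) := by
        rw [Real.sqrt_eq_rpow,
          show (2:ℝ) * x * x ^ ((1:ℝ)/2) = 2 * (x^(1:ℝ) * x^((1:ℝ)/2)) by
            rw [Real.rpow_one]; ring,
          ← Real.rpow_add hxpos]
        norm_num
      have hmon : (N/(16*(n:ℝ))) ^ ((2:ℝ)/3) ≤ (2 * x ^ ((3:ℝ)/2)) ^ ((2:ℝ)/3) :=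
        Real.rpow_le_rpow hτpos.le (hτ.trans (htb.trans_eq h32')) (by norm_num)
      have hsimp : (2 * x ^ ((3:ℝ)/2)) ^ ((2:ℝ)/3) = 2 ^ ((2:ℝ)/3) * x := by
        rw [Real.mul_rpow (by norm_num) (Real.rpow_nonneg hxnn _),
          ← Real.rpow_mul hxnn]
        norm_num
      have h2b : (2:ℝ) ^ ((2:ℝ)/3) ≤ 2 := by
        calc (2:ℝ)^((2:ℝ)/3) ≤ (2:ℝ)^(1:ℝ) :=
              Real.rpow_le_rpow_of_exponent_le (by norm_num) (by norm_num)
          _ = 2 := Real.rpow_one 2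
      have hs2 : Real.sqrt 2 ≤ 3/2 := by
        rw [show (3/2:ℝ) = Real.sqrt ((3/2)^2) from (Real.sqrt_sq (by norm_num)).symm]
        exact Real.sqrt_le_sqrt (by norm_num)
      have hτx : (N/(16*(n:ℝ)))^((2:ℝ)/3) ≤ 2^((2:ℝ)/3) * x := hmon.trans_eq hsimp
      have h1 : Real.sqrt 2 / 3 * (N/(16*(n:ℝ)))^((2:ℝ)/3)
          ≤ Real.sqrt 2 / 3 * (2^((2:ℝ)/3) * x) :=
        mul_le_mul_of_nonneg_left hτx (by positivity)
      have h3' : Real.sqrt 2 * 2^((2:ℝ)/3) ≤ 3 := by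
        calc Real.sqrt 2 * 2^((2:ℝ)/3) ≤ (3/2) * 2 :=
              mul_le_mul hs2 h2b (Real.rpow_nonneg (by norm_num) _) (by norm_num)
          _ = 3 := by norm_num
      have h2' : Real.sqrt 2 / 3 * (2^((2:ℝ)/3) * x) ≤ x := by
        nlinarith [mul_le_mul_of_nonneg_right h3' hxnn]
      linarith
  -- put everything together
  have hc0 : (0:ℝ) ≤ Real.sqrt 2 / 3 * (N / (16 * (n:ℝ))) ^ ((2:ℝ)/3) := by positivity
  calc Real.sqrt 2 / 3 * (N / (16 * (n:ℝ))) ^ ((2:ℝ)/3) * (1/15 - 1/32)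
      ≤ Real.sqrt 2 / 3 * (N / (16 * (n:ℝ))) ^ ((2:ℝ)/3) *
        ∑ R ∈ 𝓡, (μ {ω | S ω = R}).toReal :=
        mul_le_mul_of_nonneg_left hCge hc0
    _ = ∑ R ∈ 𝓡, (μ {ω | S ω = R}).toReal *
        (Real.sqrt 2 / 3 * (N / (16 * (n:ℝ))) ^ ((2:ℝ)/3)) := by
        rw [Finset.mul_sum]
        exact Finset.sum_congr rfl fun R _ => by ring
    _ ≤ ∑ R ∈ 𝓡, (μ {ω | S ω = R}).toReal * ((coveredPairs R).card : ℝ) :=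
        Finset.sum_le_sum hfin
    _ ≤ ∑ R : Finset (Finset (Fin n)),
        (μ {ω | S ω = R}).toReal * ((coveredPairs R).card : ℝ) :=
        Finset.sum_le_sum_of_subset_of_nonneg (Finset.subset_univ _)
          (fun R _ _ => mul_nonneg ENNReal.toReal_nonneg (Nat.cast_nonneg _))
    _ ≤ ∑ R : Finset (Finset (Fin n)), ∑ g : EdgeIdx n → Bool,
        (μ {ω | E ω = g ∧ S ω = R}).toReal *
        Real.logb 2 ((μ {ω | E ω = g ∧ S ω = R}).toReal /
          ((1/2:ℝ)^M * (μ {ω | S ω = R}).toReal)) :=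
        Finset.sum_le_sum (fun R _ => hinner R)
    _ = mutualInfo μ E S := hMI.symm
end

section
/- Let V = {0,…,n−1} with n ≥ 3, let E be the tuple of independent uniform {0,1}-valued edge indicators of the random graph G = G(n,1/2), fix a vertex i, and let M' = (n−1)(n−2)/2. Let T_i be a random variable taking values in finite sets of 3-element subsets of V such that almost surely every element of T_i is a triangle of G, and such that with probability at least 1 − 1/32 the set T_i contains every triangle of G that contains the vertex i. Then the mutual information between E and T_i, measured in bits, satisfies I(E; T_i) ≥ (M'/16)·(1/15 − 1/32); in particular I(E; T_i) = Ω(n²). -/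
open MeasureTheory

/-- Weighted Gibbs / entropy bound. -/
lemma gibbs {ι : Type*} (S : Finset ι) (p : ι → ℝ) (W : ℝ) (hW : 0 < W)
    (hp : ∀ g ∈ S, 0 ≤ p g) (hsum : ∑ g ∈ S, p g = W) :
    W * Real.log (W / S.card) ≤ ∑ g ∈ S, p g * Real.log (p g) := by
  have hSne : S.Nonempty := by
    rcases S.eq_empty_or_nonempty with h | h
    · exfalso; rw [h] at hsum; simp at hsum; linarith
    · exact h
  have hc : (0:ℝ) < S.card := by exact_mod_cast Finset.card_pos.mpr hSne
  have key : ∀ g ∈ S, p g * Real.log (W / S.card) + (p g - W / S.card) ≤ p g * Real.log (p g) := by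
    intro g hg
    rcases eq_or_lt_of_le (hp g hg) with h0 | h0
    · rw [← h0]; simp; positivity
    · have hx : (0:ℝ) < p g * S.card / W := by positivity
      have := Real.one_sub_inv_le_log_of_pos hx
      have hlog : Real.log (p g * S.card / W) = Real.log (p g) - Real.log (W / S.card) := by
        rw [Real.log_div (by positivity) (by positivity), Real.log_mul (ne_of_gt h0) (ne_of_gt hc),
          Real.log_div (ne_of_gt hW) (ne_of_gt hc)]
        ring
      rw [hlog] at this
      have h2 : p g * (1 - (p g * S.card / W)⁻¹) ≤ p g * (Real.log (p g) - Real.log (W / S.card)) :=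
        mul_le_mul_of_nonneg_left this (le_of_lt h0)
      have h3 : p g * (1 - (p g * S.card / W)⁻¹) = p g - W / S.card := by
        field_simp
      nlinarith [h2, h3]
  calc W * Real.log (W / S.card) = ∑ g ∈ S, (p g * Real.log (W / S.card) + (p g - W / S.card)) := by
        rw [Finset.sum_add_distrib, ← Finset.sum_mul, hsum, Finset.sum_sub_distrib, hsum]
        simp
        field_simp
        ring
    _ ≤ ∑ g ∈ S, p g * Real.log (p g) := Finset.sum_le_sum key

lemma key_ineq {ι : Type*} [Fintype ι] (S : Finset ι) (p : ι → ℝ) (pR : ℝ) (M c : ℕ)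
    (hp : ∀ g, 0 ≤ p g) (hsum : ∑ g : ι, p g = pR) (hsupp : ∀ g, p g ≠ 0 → g ∈ S)
    (hcard : S.card ≤ 2 ^ (M - c)) (hcM : c ≤ M) :
    pR * c ≤ ∑ g : ι, p g * Real.logb 2 (p g / ((1/2:ℝ)^M * pR)) := by
  rcases eq_or_lt_of_le (hsum ▸ Finset.sum_nonneg (fun g _ => hp g) : (0:ℝ) ≤ pR) with h0 | h0
  · have hz : ∀ g : ι, p g = 0 := by
      intro g
      have := (Finset.sum_eq_zero_iff_of_nonneg (fun g _ => hp g)).mp (hsum.trans h0.symm)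
      exact this g (Finset.mem_univ g)
    simp [hz, ← h0]
  -- pR > 0 case
  set S' : Finset ι := S.filter (fun g => p g ≠ 0) with hS'
  have hS'mem : ∀ g, p g ≠ 0 → g ∈ S' := fun g hg => Finset.mem_filter.mpr ⟨hsupp g hg, hg⟩
  have hredsum : ∀ f : ι → ℝ, (∀ g, p g = 0 → p g * f g = 0) →
      ∑ g : ι, p g * f g = ∑ g ∈ S', p g * f g := by
    intro f hf
    rw [← Finset.sum_subset (Finset.subset_univ S')]
    intro g _ hg
    have : p g = 0 := by
      by_contra h
      exact hg (hS'mem g h)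
    exact hf g this
  have hsum' : ∑ g ∈ S', p g = pR := by
    rw [← hsum, ← Finset.sum_subset (Finset.subset_univ S')]
    intro g _ hg
    by_contra h
    exact hg (hS'mem g h)
  have hS'ne : S'.Nonempty := by
    by_contra h
    rw [Finset.not_nonempty_iff_eq_empty] at h
    rw [h] at hsum'; simp at hsum'; linarith
  have hcpos : (0:ℝ) < S'.card := by exact_mod_cast Finset.card_pos.mpr hS'ne
  have hcard' : (S'.card : ℝ) ≤ 2 ^ ((M:ℝ) - c) := by
    have h1 : (S'.card : ℝ) ≤ (S.card : ℝ) := by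
      exact_mod_cast Finset.card_le_card (Finset.filter_subset _ _)
    have h2 : (S.card : ℝ) ≤ (2:ℝ) ^ (M - c : ℕ) := by exact_mod_cast hcard
    have h3 : ((2:ℝ) ^ (M - c : ℕ)) = 2 ^ ((M:ℝ) - c) := by
      rw [← Real.rpow_natCast 2 (M - c)]
      congr 1
      push_cast [hcM]
      ring
    linarith [h3 ▸ h2]
  -- rewrite the sum
  have hlog2 : (0:ℝ) < Real.log 2 := Real.log_pos (by norm_num)
  have step1 : ∑ g : ι, p g * Real.logb 2 (p g / ((1/2:ℝ)^M * pR))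
      = ∑ g ∈ S', p g * (Real.logb 2 (p g) + M - Real.logb 2 pR) := by
    rw [hredsum _ (fun g hg => by simp [hg])]
    apply Finset.sum_congr rfl
    intro g hg
    have hgpos : 0 < p g := lt_of_le_of_ne (hp g) (Ne.symm (Finset.mem_filter.mp hg).2)
    congr 1
    rw [Real.logb_div (ne_of_gt hgpos) (by positivity),
        Real.logb_mul (by positivity) (ne_of_gt h0),
        Real.logb_pow]
    have : Real.logb 2 (1/2 : ℝ) = -1 := by
      rw [one_div, Real.logb_inv]
      simp [Real.logb_self_eq_one]
    rw [this]
    ring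
  rw [step1]
  have expand : ∑ g ∈ S', p g * (Real.logb 2 (p g) + M - Real.logb 2 pR)
      = (∑ g ∈ S', p g * Real.logb 2 (p g)) + pR * M - pR * Real.logb 2 pR := by
    simp only [mul_sub, mul_add, Finset.sum_sub_distrib, Finset.sum_add_distrib,
      ← Finset.sum_mul, hsum']
  rw [expand]
  have hgibbs : pR * Real.log (pR / S'.card) ≤ ∑ g ∈ S', p g * Real.log (p g) :=
    gibbs S' p pR h0 (fun g _ => hp g) hsum'
  have hgibbs2 : pR * Real.logb 2 (pR / S'.card) ≤ ∑ g ∈ S', p g * Real.logb 2 (p g) :=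
    calc pR * Real.logb 2 (pR / S'.card) = (pR * Real.log (pR / S'.card)) / Real.log 2 := by
          rw [Real.logb]; ring
      _ ≤ (∑ g ∈ S', p g * Real.log (p g)) / Real.log 2 := by gcongr
      _ = ∑ g ∈ S', p g * Real.logb 2 (p g) := by
          rw [Finset.sum_div]
          exact Finset.sum_congr rfl fun g _ => by rw [Real.logb]; ring
  have hlogcard : Real.logb 2 (S'.card) ≤ (M:ℝ) - c := by
    have h1 : Real.logb 2 (S'.card) ≤ Real.logb 2 (2 ^ ((M:ℝ) - c)) :=
      Real.logb_le_logb_of_le (by norm_num) hcpos hcard'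
    rwa [Real.logb_rpow (by norm_num : (0:ℝ) < 2) (by norm_num)] at h1
  have hfinal : pR * Real.logb 2 (pR / S'.card) = pR * Real.logb 2 pR - pR * Real.logb 2 S'.card := by
    rw [Real.logb_div (ne_of_gt h0) (ne_of_gt hcpos)]
    ring
  nlinarith [hgibbs2, hfinal ▸ hgibbs2, mul_le_mul_of_nonneg_left hlogcard (le_of_lt h0)]

lemma card_forced {α : Type*} [Fintype α] [DecidableEq α] (P : Finset α) :
    (Finset.univ.filter (fun h : α → Bool => ∀ e ∈ P, h e = true)).card
      = 2 ^ (Fintype.card α - P.card) := by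
  rw [← Fintype.card_subtype]
  have e : {h : α → Bool // ∀ e ∈ P, h e = true} ≃ ({e : α // e ∉ P} → Bool) :=
    { toFun := fun h e => h.1 e.1
      invFun := fun f => ⟨fun a => if ha : a ∈ P then true else f ⟨a, ha⟩,
        fun e he => by simp [he]⟩
      left_inv := fun h => by
        ext a
        by_cases ha : a ∈ P
        · simp [ha, h.2 a ha]
        · simp [ha]
      right_inv := fun f => by
        ext e
        simp [e.2] }
  rw [Fintype.card_congr e, Fintype.card_fun, Fintype.card_bool]
  congr 1
  have : Fintype.card {e : α // e ∉ P} = Fintype.card α - Fintype.card {e : α // e ∈ P} :=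
    Fintype.card_subtype_compl _
  rw [this, Fintype.card_coe]
lemma partition_sum {Ω α : Type*} [MeasurableSpace Ω] (μ : Measure Ω) [Fintype α]
    (E : Ω → α) (hE : ∀ a, MeasurableSet {ω | E ω = a}) (s : Set Ω) (hs : MeasurableSet s) :
    ∑ a, μ ({ω | E ω = a} ∩ s) = μ s := by
  rw [← measure_biUnion_finset (s := Finset.univ)]
  · congr 1
    ext ω
    simp
  · intro a _ b _ hab
    intro t hta htb x hx
    have h1 := hta hx
    have h2 := htb hx
    simp only [Set.mem_inter_iff, Set.mem_setOf_eq] at h1 h2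
    exact absurd (h1.1 ▸ h2.1) (by exact fun h => hab (by rw [← h1.1, h2.1]))
  · intro a _
    exact (hE a).inter hs

lemma measure_comp {Ω α : Type*} [MeasurableSpace Ω] (μ : Measure Ω) [Fintype α]
    (T : Ω → α) (hT : ∀ a, MeasurableSet {ω | T ω = a}) (Q : α → Prop) [DecidablePred Q] :
    μ {ω | Q (T ω)} = ∑ R ∈ Finset.univ.filter Q, μ {ω | T ω = R} := by
  rw [← measure_biUnion_finset]
  · congr 1
    ext ω
    simp only [Set.mem_iUnion, Set.mem_setOf_eq, Finset.mem_filter, Finset.mem_univ, true_and]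
    exact ⟨fun h => ⟨T ω, h, rfl⟩, fun ⟨R, hR, hTR⟩ => hTR ▸ hR⟩
  · intro a _ b _ hab t hta htb x hx
    have h1 := hta hx
    have h2 := htb hx
    simp only [Set.mem_setOf_eq] at h1 h2
    exact hab (by rw [← h1, h2])
  · exact fun a _ => hT a

lemma meas_pair {Ω α β : Type*} [MeasurableSpace Ω] [Countable α] [Countable β]
    (E : Ω → α) (T : Ω → β) (hE : ∀ a, MeasurableSet {ω | E ω = a})
    (hT : ∀ b, MeasurableSet {ω | T ω = b}) (Q : α → β → Prop) :
    MeasurableSet {ω | Q (E ω) (T ω)} := by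
  have : {ω | Q (E ω) (T ω)} =
      ⋃ (g) (R) (_ : Q g R), ({ω | E ω = g} ∩ {ω | T ω = R}) := by
    ext ω
    simp only [Set.mem_iUnion, Set.mem_inter_iff, Set.mem_setOf_eq]
    exact ⟨fun h => ⟨E ω, T ω, h, rfl, rfl⟩,
      fun ⟨g, R, hQ, h1, h2⟩ => by rw [h1, h2]; exact hQ⟩
  rw [this]
  exact MeasurableSet.iUnion fun g => MeasurableSet.iUnion fun R =>
    MeasurableSet.iUnion fun _ => (hE g).inter (hT R)

lemma forced_true {n : ℕ} {g : EdgeIdx n → Bool} {R : Finset (Finset (Fin n))}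
    (hg : ∀ s ∈ R, isTriangle g s) : ∀ e ∈ coveredPairs R, g e = true := by
  rintro ⟨q, hq⟩ he
  induction q using Sym2.ind with
  | _ u v =>
    obtain ⟨-, s, hsR, hes⟩ := Finset.mem_filter.mp he
    rw [Finset.mk_mem_sym2_iff] at hes
    have huv : u ≠ v := by simpa [Sym2.mk_isDiag_iff] using hq
    obtain ⟨e', he'val, he'g⟩ := (hg s hsR).2 u hes.1 v hes.2 huv
    have : e' = ⟨s(u, v), hq⟩ := Subtype.ext he'val
    rwa [this] at he'g

lemma mem_coveredPairs {n : ℕ} {R : Finset (Finset (Fin n))} {e : EdgeIdx n} :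
    e ∈ coveredPairs R ↔ ∃ s ∈ R, e.val ∈ s.sym2 := by
  simp [coveredPairs]


lemma card_tri_le {n : ℕ} (R : Finset (Finset (Fin n))) :
    (Finset.univ.filter (fun g : EdgeIdx n → Bool => ∀ s ∈ R, isTriangle g s)).card
      ≤ 2 ^ (Fintype.card (EdgeIdx n) - (coveredPairs R).card) := by
  rw [← card_forced]
  apply Finset.card_le_card
  intro g hg
  rw [Finset.mem_filter] at hg ⊢
  exact ⟨hg.1, forced_true hg.2⟩

-- triangle on {i,u,v} iff forced on its three pairs
lemma isTriangle_iff_forced {n : ℕ} (g : EdgeIdx n → Bool) (s0 : Finset (Fin n))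
    (h3 : s0.card = 3) :
    isTriangle g s0 ↔ ∀ e ∈ coveredPairs {s0}, g e = true := by
  constructor
  · intro h
    exact forced_true (by simpa using h)
  · intro h
    refine ⟨h3, fun u hu v hv huv => ?_⟩
    have hnd : ¬ (s(u,v)).IsDiag := by simpa [Sym2.mk_isDiag_iff] using huv
    refine ⟨⟨s(u,v), hnd⟩, rfl, h _ ?_⟩
    rw [mem_coveredPairs]
    exact ⟨s0, by simp, by rw [Finset.mk_mem_sym2_iff]; exact ⟨hu, hv⟩⟩

lemma coveredPairs_single {n : ℕ} (i u v : Fin n) (hiu : i ≠ u) (hiv : i ≠ v) (huv : u ≠ v) :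
    coveredPairs {({i, u, v} : Finset (Fin n))} =
      {⟨s(i,u), by simp [Sym2.mk_isDiag_iff, hiu]⟩,
       ⟨s(i,v), by simp [Sym2.mk_isDiag_iff, hiv]⟩,
       ⟨s(u,v), by simp [Sym2.mk_isDiag_iff, huv]⟩} := by
  ext e
  rw [mem_coveredPairs]
  obtain ⟨q, hq⟩ := e
  induction q using Sym2.ind with
  | _ a b =>
    simp only [Finset.mem_singleton, Finset.mem_insert, exists_eq_left,
      Finset.mk_mem_sym2_iff, Subtype.mk.injEq, Sym2.eq_iff]
    have hab : a ≠ b := by simpa [Sym2.mk_isDiag_iff] using hq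
    constructor
    · rintro ⟨(rfl | rfl | rfl), (rfl | rfl | rfl)⟩ <;> tauto
    · rintro ((⟨rfl, rfl⟩|⟨rfl,rfl⟩) | (⟨rfl, rfl⟩|⟨rfl,rfl⟩) | (⟨rfl, rfl⟩|⟨rfl,rfl⟩)) <;>
        simp

lemma card_coveredPairs_single {n : ℕ} (i u v : Fin n) (hiu : i ≠ u) (hiv : i ≠ v)
    (huv : u ≠ v) : (coveredPairs {({i, u, v} : Finset (Fin n))}).card = 3 := by
  rw [coveredPairs_single i u v hiu hiv huv]
  rw [Finset.card_insert_of_notMem, Finset.card_insert_of_notMem, Finset.card_singleton]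
  · simp only [Finset.mem_singleton, Subtype.mk.injEq, Sym2.eq_iff]
    tauto
  · simp only [Finset.mem_insert, Finset.mem_singleton, Subtype.mk.injEq, Sym2.eq_iff]
    tauto

lemma card_edges_containing {n : ℕ} (i : Fin n) :
    (Finset.univ.filter (fun f : EdgeIdx n => i ∈ f.val)).card = n - 1 := by
  rw [show n - 1 = (Finset.univ.filter (fun j : Fin n => j ≠ i)).card by
    rw [Finset.filter_ne', Finset.card_erase_of_mem (Finset.mem_univ i), Finset.card_univ,
      Fintype.card_fin]]
  symm
  apply Finset.card_bij (fun j hj => (⟨s(i,j), by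
    intro h
    rw [Sym2.mk_isDiag_iff] at h
    exact (by simpa using hj : j ≠ i) h.symm⟩ : EdgeIdx n))
  · intro j hj
    simp
  · intro a ha b hb hab
    simp only [Subtype.mk.injEq, Sym2.eq_iff] at hab
    have ha' : a ≠ i := by simpa using ha
    have hb' : b ≠ i := by simpa using hb
    tauto
  · rintro ⟨q, hq⟩ hf
    induction q using Sym2.ind with
    | _ a b =>
      have hab : a ≠ b := by simpa [Sym2.mk_isDiag_iff] using hq
      have hi : i ∈ s(a, b) := by simpa using hf
      rw [Sym2.mem_iff] at hi
      rcases hi with rfl | rfl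
      · refine ⟨b, by simpa [ne_comm] using hab, ?_⟩
        simp
      · refine ⟨a, by simpa using hab.symm ∘ Eq.symm, ?_⟩
        apply Subtype.ext
        simp [Sym2.eq_swap]
lemma covered_prob {Ω : Type*} [MeasurableSpace Ω] (μ : Measure Ω) [IsProbabilityMeasure μ]
    (n M : ℕ) (hM3 : 3 ≤ M) (hMcard : Fintype.card (EdgeIdx n) = M) (i : Fin n)
    (E : Ω → (EdgeIdx n → Bool))
    (hEmeas : ∀ g : EdgeIdx n → Bool, MeasurableSet {ω | E ω = g})
    (hEdist : ∀ g : EdgeIdx n → Bool, (μ {ω | E ω = g}).toReal = (1 / 2 : ℝ) ^ M)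
    (Ti : Ω → Finset (Finset (Fin n)))
    (hTmeas : ∀ R : Finset (Finset (Fin n)), MeasurableSet {ω | Ti ω = R})
    (hTloc : 1 - 1 / 32 ≤ (μ {ω | ∀ s : Finset (Fin n),
      isTriangle (E ω) s → i ∈ s → s ∈ Ti ω}).toReal)
    (f : EdgeIdx n) (hf : i ∉ f.val) :
    3/32 ≤ (μ {ω | f ∈ coveredPairs (Ti ω)}).toReal := by
  obtain ⟨q, hq⟩ := f
  induction q using Sym2.ind with
  | _ u v =>
  have huv : u ≠ v := by simpa [Sym2.mk_isDiag_iff] using hq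
  simp only [Sym2.mem_iff, not_or] at hf
  have hiu : i ≠ u := hf.1
  have hiv : i ≠ v := hf.2
  set s0 : Finset (Fin n) := {i, u, v} with hs0
  have h3 : s0.card = 3 := by
    rw [hs0, Finset.card_insert_of_notMem (by simp [hiu, hiv]),
      Finset.card_insert_of_notMem (by simp [huv]), Finset.card_singleton]
  set A0 : Set Ω := {ω | isTriangle (E ω) s0} with hA0def
  set B0 : Set Ω := {ω | ∀ s : Finset (Fin n), isTriangle (E ω) s → i ∈ s → s ∈ Ti ω}
  -- measure of A0
  have hA0 : (μ A0).toReal = 1/8 := by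
    have h1 : μ A0 = ∑ g ∈ Finset.univ.filter (fun g => isTriangle g s0), μ {ω | E ω = g} :=
      measure_comp μ E hEmeas (fun g => isTriangle g s0)
    have h2 : (Finset.univ.filter (fun g : EdgeIdx n → Bool => isTriangle g s0))
        = Finset.univ.filter (fun g => ∀ e ∈ coveredPairs {s0}, g e = true) :=
      Finset.filter_congr (fun g _ => isTriangle_iff_forced g s0 h3)
    have h4 : (Finset.univ.filter (fun g : EdgeIdx n → Bool => isTriangle g s0)).card
        = 2 ^ (M - 3) := by
      rw [h2, card_forced, hMcard, card_coveredPairs_single i u v hiu hiv huv]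
    rw [h1, ENNReal.toReal_sum (fun g _ => measure_ne_top μ _)]
    simp only [hEdist]
    rw [Finset.sum_const, h4, nsmul_eq_mul]
    push_cast
    obtain ⟨k, hk⟩ : ∃ k, M = k + 3 := ⟨M - 3, by omega⟩
    rw [hk, Nat.add_sub_cancel, pow_add, ← mul_assoc, ← mul_pow]
    norm_num
  -- measurability
  have hA0meas : MeasurableSet A0 :=
    meas_pair E E hEmeas hEmeas (fun g _ => isTriangle g s0)
  have hB0meas : MeasurableSet B0 :=
    meas_pair E Ti hEmeas hTmeas (fun g R => ∀ s : Finset (Fin n), isTriangle g s → i ∈ s → s ∈ R)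
  -- inclusion
  have hsub : A0 ∩ B0 ⊆ {ω | (⟨s(u,v), hq⟩ : EdgeIdx n) ∈ coveredPairs (Ti ω)} := by
    rintro ω ⟨hA, hB⟩
    have hs0T : s0 ∈ Ti ω := hB s0 hA (by simp [hs0])
    rw [Set.mem_setOf_eq, mem_coveredPairs]
    exact ⟨s0, hs0T, by rw [Finset.mk_mem_sym2_iff]; constructor <;> simp [hs0]⟩
  -- inclusion-exclusion
  have hie := measure_union_add_inter (μ := μ) A0 hB0meas
  have hietr : (μ (A0 ∪ B0)).toReal + (μ (A0 ∩ B0)).toReal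
      = (μ A0).toReal + (μ B0).toReal := by
    rw [← ENNReal.toReal_add (measure_ne_top μ _) (measure_ne_top μ _),
      ← ENNReal.toReal_add (measure_ne_top μ _) (measure_ne_top μ _), hie]
  have hU1 : (μ (A0 ∪ B0)).toReal ≤ 1 := by
    have := prob_le_one (μ := μ) (s := A0 ∪ B0)
    exact ENNReal.toReal_mono (by norm_num) this |>.trans (by norm_num)
  have hmono : (μ (A0 ∩ B0)).toReal ≤ (μ {ω | (⟨s(u,v), hq⟩ : EdgeIdx n) ∈ coveredPairs (Ti ω)}).toReal :=
    ENNReal.toReal_mono (measure_ne_top μ _) (measure_mono hsub)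
  linarith
/-- **Key inequality in the proof of Proposition 7 of the paper (local listing).**
Let `V = {0,…,n-1}` with `n ≥ 3`, let `E` be the tuple of independent uniform
`{0,1}`-valued edge indicators of the random graph `G = G(n, 1/2)`, fix a vertex `i`,
and let `M' = (n-1)(n-2)/2`.  Let `T_i` be a random variable taking values in finite
sets of 3-element subsets of `V` such that almost surely every element of `T_i` is a
triangle of `G`, and such that with probability at least `1 - 1/32` the set `T_i`
contains every triangle of `G` containing `i`.  Then
`I(E; T_i) ≥ (M'/16) (1/15 - 1/32)`; in particular `I(E; T_i) = Ω(n²)`. -/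
theorem mutualInfo_lower_bound_local_listing
    {Ω : Type*} [MeasurableSpace Ω] (μ : Measure Ω) [IsProbabilityMeasure μ]
    (n M : ℕ) (hn : 3 ≤ n) (hM : M = n * (n - 1) / 2)
    (hMcard : Fintype.card (EdgeIdx n) = M)
    (i : Fin n)
    (M' : ℝ) (hM' : M' = ((n : ℝ) - 1) * ((n : ℝ) - 2) / 2)
    (E : Ω → (EdgeIdx n → Bool))
    (hEmeas : ∀ g : EdgeIdx n → Bool, MeasurableSet {ω | E ω = g})
    (hEdist : ∀ g : EdgeIdx n → Bool,
      (μ {ω | E ω = g}).toReal = (1 / 2 : ℝ) ^ M)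
    (Ti : Ω → Finset (Finset (Fin n)))
    (hTmeas : ∀ R : Finset (Finset (Fin n)), MeasurableSet {ω | Ti ω = R})
    (hTtri : ∀ᵐ ω ∂μ, ∀ s ∈ Ti ω, isTriangle (E ω) s)
    (hTloc : 1 - 1 / 32 ≤ (μ {ω | ∀ s : Finset (Fin n),
      isTriangle (E ω) s → i ∈ s → s ∈ Ti ω}).toReal) :
    M' / 16 * (1 / 15 - 1 / 32) ≤ mutualInfo μ E Ti := by
  classical
  set pR : Finset (Finset (Fin n)) → ℝ := fun R => (μ {ω | Ti ω = R}).toReal with hpRdef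
  have hM3 : 3 ≤ M := by
    have h6 : 6 ≤ n * (n - 1) := by
      calc 6 = 3 * 2 := rfl
        _ ≤ n * (n - 1) := Nat.mul_le_mul hn (by omega)
    rw [hM]
    calc 3 = 6 / 2 := rfl
      _ ≤ n * (n - 1) / 2 := Nat.div_le_div_right h6
  -- Step A : mutual information dominates the expected number of covered pairs
  have stepA : ∑ R : Finset (Finset (Fin n)), pR R * ((coveredPairs R).card : ℝ)
      ≤ mutualInfo μ E Ti := by
    unfold mutualInfo
    rw [Finset.sum_comm]
    simp only [hEdist]
    apply Finset.sum_le_sum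
    intro R _
    have hsum : ∑ g : EdgeIdx n → Bool, (μ {ω | E ω = g ∧ Ti ω = R}).toReal = pR R := by
      rw [← ENNReal.toReal_sum (fun g _ => measure_ne_top μ _)]
      congr 1
      exact partition_sum μ E hEmeas {ω | Ti ω = R} (hTmeas R)
    have hsupp : ∀ g : EdgeIdx n → Bool, (μ {ω | E ω = g ∧ Ti ω = R}).toReal ≠ 0 →
        g ∈ Finset.univ.filter (fun g : EdgeIdx n → Bool => ∀ s ∈ R, isTriangle g s) := by
      intro g hg
      rw [Finset.mem_filter]
      refine ⟨Finset.mem_univ g, ?_⟩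
      by_contra hnot
      apply hg
      have hbad : μ {ω | ¬ ∀ s ∈ Ti ω, isTriangle (E ω) s} = 0 := ae_iff.mp hTtri
      have hsub : {ω | E ω = g ∧ Ti ω = R} ⊆ {ω | ¬ ∀ s ∈ Ti ω, isTriangle (E ω) s} := by
        rintro ω ⟨he, ht⟩
        rw [Set.mem_setOf_eq, he, ht]
        exact hnot
      rw [measure_mono_null hsub hbad]
      simp
    have hcard := card_tri_le R
    rw [hMcard] at hcard
    have hcM : (coveredPairs R).card ≤ M := by
      rw [← hMcard, ← Finset.card_univ]
      exact Finset.card_le_univ _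
    have := key_ineq (Finset.univ.filter (fun g : EdgeIdx n → Bool => ∀ s ∈ R, isTriangle g s))
      (fun g => (μ {ω | E ω = g ∧ Ti ω = R}).toReal) (pR R) M (coveredPairs R).card
      (fun g => ENNReal.toReal_nonneg) hsum hsupp hcard hcM
    exact this
  -- Step B : expected covered pairs as a sum over edges
  have stepB : ∑ R : Finset (Finset (Fin n)), pR R * ((coveredPairs R).card : ℝ)
      = ∑ f : EdgeIdx n, (μ {ω | f ∈ coveredPairs (Ti ω)}).toReal := by
    have inner : ∀ f : EdgeIdx n, (μ {ω | f ∈ coveredPairs (Ti ω)}).toReal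
        = ∑ R ∈ Finset.univ.filter (fun R => f ∈ coveredPairs R), pR R := by
      intro f
      rw [measure_comp μ Ti hTmeas (fun R => f ∈ coveredPairs R),
        ENNReal.toReal_sum (fun _ _ => measure_ne_top μ _)]
    calc ∑ R : Finset (Finset (Fin n)), pR R * ((coveredPairs R).card : ℝ)
        = ∑ R : Finset (Finset (Fin n)), ∑ f : EdgeIdx n,
            (if f ∈ coveredPairs R then pR R else 0) := by
          apply Finset.sum_congr rfl
          intro R _
          rw [Finset.sum_ite_mem, Finset.univ_inter, Finset.sum_const, nsmul_eq_mul]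
          ring
      _ = ∑ f : EdgeIdx n, ∑ R : Finset (Finset (Fin n)),
            (if f ∈ coveredPairs R then pR R else 0) := Finset.sum_comm
      _ = ∑ f : EdgeIdx n, (μ {ω | f ∈ coveredPairs (Ti ω)}).toReal := by
          apply Finset.sum_congr rfl
          intro f _
          rw [inner f, Finset.sum_filter]
  -- Step C : lower bound each term for edges avoiding i
  set A : Finset (EdgeIdx n) := Finset.univ.filter (fun f : EdgeIdx n => i ∉ f.val) with hAdef
  have stepC : (A.card : ℝ) * (3/32)
      ≤ ∑ f : EdgeIdx n, (μ {ω | f ∈ coveredPairs (Ti ω)}).toReal := by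
    calc (A.card : ℝ) * (3/32) = ∑ f ∈ A, (3/32 : ℝ) := by
          rw [Finset.sum_const, nsmul_eq_mul]
      _ ≤ ∑ f ∈ A, (μ {ω | f ∈ coveredPairs (Ti ω)}).toReal := by
          apply Finset.sum_le_sum
          intro f hf
          exact covered_prob μ n M hM3 hMcard i E hEmeas hEdist Ti hTmeas hTloc f
            (by simpa [hAdef] using hf)
      _ ≤ ∑ f : EdgeIdx n, (μ {ω | f ∈ coveredPairs (Ti ω)}).toReal := by
          apply Finset.sum_le_sum_of_subset_of_nonneg (Finset.subset_univ A)
          intro f _ _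
          exact ENNReal.toReal_nonneg
  -- counting : |A| = M'
  have hcount : (A.card : ℝ) = M' := by
    have hB : (Finset.univ.filter (fun f : EdgeIdx n => i ∈ f.val)).card = n - 1 :=
      card_edges_containing i
    have hsplit : (Finset.univ.filter (fun f : EdgeIdx n => i ∈ f.val)).card + A.card = M := by
      rw [hAdef, Finset.card_filter_add_card_filter_not, Finset.card_univ, hMcard]
    have h2M : 2 * M = n * (n - 1) := by
      have hev : 2 ∣ n * (n - 1) := by
        obtain ⟨m, hm⟩ : ∃ m, n = m + 1 := ⟨n - 1, by omega⟩
        subst hm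
        simpa [Nat.add_sub_cancel, mul_comm] using (Nat.even_mul_succ_self m).two_dvd
      rw [hM, Nat.mul_div_cancel' hev]
    -- cast to the reals
    have hn1 : ((n - 1 : ℕ) : ℝ) = (n : ℝ) - 1 := by
      rw [Nat.cast_sub (by omega)]; norm_num
    have hsplitR : ((n : ℝ) - 1) + (A.card : ℝ) = (M : ℝ) := by
      rw [← hn1, ← hB]
      exact_mod_cast congrArg (Nat.cast : ℕ → ℝ) hsplit
    have h2MR : 2 * (M : ℝ) = (n : ℝ) * ((n : ℝ) - 1) := by
      rw [← hn1]
      exact_mod_cast congrArg (Nat.cast : ℕ → ℝ) h2M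
    rw [hM']
    linear_combination hsplitR + h2MR / 2
  -- final numeric assembly
  have hM'nonneg : 0 ≤ M' := by
    have hn3 : (3 : ℝ) ≤ (n : ℝ) := by exact_mod_cast hn
    rw [hM']
    nlinarith
  calc M' / 16 * (1 / 15 - 1 / 32) ≤ M' * (3/32) := by linarith
    _ = (A.card : ℝ) * (3/32) := by rw [hcount]
    _ ≤ ∑ f : EdgeIdx n, (μ {ω | f ∈ coveredPairs (Ti ω)}).toReal := stepC
    _ = ∑ R : Finset (Finset (Fin n)), pR R * ((coveredPairs R).card : ℝ) := stepB.symm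
    _ ≤ mutualInfo μ E Ti := stepA
end
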